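/- arXiv:0912.4771 — 2 statements merged into one kernel-verified Lean document; each statement's English description precedes it below -/
import Mathlib

section
/- For a Lipschitz function f on the Bernoulli space X = {1,...,d}^ℕ with the metric d_θ(x,y) = θ^N (where N is the first index where x and y differ), and β(f) = sup over shift-invariant probabilities ν of ∫f dν, the infimum over all periodic points x of I(x) := n_x·β(f) − f^{n_x}(x) equals 0, where n_x is the minimal period of x and f^n(x) = Σ_{i=0}^{n−1} f(σ^i x). -/
open MeasureTheory Filter Real Topology
open scoped ENNReal

noncomputable section

abbrev X (d : ℕ) : Type := ℕ → Fin d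

def shift {d : ℕ} (x : X d) : X d := fun n => x (n + 1)

def birkhoff {d : ℕ} (f : X d → ℝ) (n : ℕ) (x : X d) : ℝ :=
  ∑ i ∈ Finset.range n, f (shift^[i] x)

def IsPeriodic {d : ℕ} (x : X d) : Prop := ∃ n, 0 < n ∧ shift^[n] x = x

def minPer {d : ℕ} (x : X d) : ℕ := Function.minimalPeriod shift x

def beta {d : ℕ} (f : X d → ℝ) : ℝ :=
  sSup {r : ℝ | ∃ μ : Measure (X d), IsProbabilityMeasure μ ∧ μ.map shift = μ ∧ r = ∫ x, f x ∂μ}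

def Ifun {d : ℕ} (f : X d → ℝ) (x : X d) : ℝ :=
  (minPer x : ℝ) * beta f - birkhoff f (minPer x) x

def dtheta {d : ℕ} (θ : ℝ) (x y : X d) : ℝ :=
  letI : Decidable (x = y) := Classical.dec _
  if h : x = y then 0 else θ ^ Nat.find (Function.ne_iff.mp h)

def LipWrt {d : ℕ} (θ C : ℝ) (f : X d → ℝ) : Prop :=
  ∀ x y, |f x - f y| ≤ C * dtheta θ x y

def periodize {d : ℕ} (n : ℕ) (w : Fin (n + 1) → Fin d) : X d :=
  fun i => w ⟨i % (n + 1), Nat.mod_lt i (Nat.succ_pos n)⟩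

def pressure {d : ℕ} (g : X d → ℝ) : ℝ :=
  Filter.limsup (fun n : ℕ =>
    Real.log (∑ w : Fin (n + 1) → Fin d, Real.exp (birkhoff g (n + 1) (periodize n w))) / ((n : ℝ) + 1))
    Filter.atTop

def zetaVal {d : ℕ} (f : X d → ℝ) (c s : ℝ) (k : X d → ℝ) : ℝ :=
  ∑' n : ℕ, ∑ w : Fin (n + 1) → Fin d,
    Real.exp (c * s * birkhoff f (n + 1) (periodize n w) - ((n : ℝ) + 1) * pressure (fun y => c * f y))
      * (birkhoff k (n + 1) (periodize n w) / ((n : ℝ) + 1))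

def etaVal {d : ℕ} (f : X d → ℝ) (c : ℝ) (N : ℕ) (k : X d → ℝ) : ℝ :=
  ∑ n ∈ Finset.range N, ∑ w : Fin (n + 1) → Fin d,
    Real.exp (c * birkhoff f (n + 1) (periodize n w)) * (birkhoff k (n + 1) (periodize n w) / ((n : ℝ) + 1))

def piVal {d : ℕ} (f : X d → ℝ) (c : ℝ) (N : ℕ) (k : X d → ℝ) : ℝ :=
  ∑ n ∈ Finset.range N, ∑ w : Fin (n + 1) → Fin d,
    Real.exp (c * birkhoff f (n + 1) (periodize n w) - ((n : ℝ) + 1) * pressure (fun y => c * f y))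
      * (birkhoff k (n + 1) (periodize n w) / ((n : ℝ) + 1))

def cylSet {d : ℕ} (m : ℕ) (w : Fin m → Fin d) : Set (X d) :=
  {x : X d | ∀ i : Fin m, x i = w i}

def Itilde {d : ℕ} (θ : ℝ) (f : X d → ℝ) (x : X d) : EReal :=
  ⨆ ε : {e : ℝ // 0 < e},
    sInf {r : EReal | ∃ y : X d, IsPeriodic y ∧ dtheta θ x y ≤ ε.1 ∧ r = ((Ifun f y : ℝ) : EReal)}

def orbitMeasure {d : ℕ} (x : X d) : Measure (X d) :=
  ((minPer x : ℝ≥0∞))⁻¹ • ∑ i ∈ Finset.range (minPer x), Measure.dirac (shift^[i] x)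

section Aux
variable {d : ℕ}

lemma shift_iter_apply (n : ℕ) (x : X d) (i : ℕ) : shift^[n] x i = x (i + n) := by
  induction n generalizing x i with
  | zero => rfl
  | succ n ih =>
    rw [Function.iterate_succ_apply, ih]
    simp [shift, Nat.add_assoc, Nat.add_comm 1 n]

lemma measurable_shift : Measurable (shift (d := d)) :=
  measurable_pi_lambda _ fun i => measurable_pi_apply _

/-- agreement of first m coordinates -/
def Agree (m : ℕ) (x y : X d) : Prop := ∀ i < m, x i = y i

lemma dtheta_nonneg {θ : ℝ} (hθ0 : 0 < θ) (x y : X d) : 0 ≤ dtheta θ x y := by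
  unfold dtheta
  split
  · exact le_refl _
  · positivity

lemma dtheta_le_pow {θ : ℝ} (hθ0 : 0 < θ) (hθ1 : θ < 1) {m : ℕ} {x y : X d}
    (h : Agree m x y) : dtheta θ x y ≤ θ ^ m := by
  unfold dtheta
  split
  · positivity
  · next hne =>
    apply pow_le_pow_of_le_one hθ0.le hθ1.le
    by_contra hlt
    push_neg at hlt
    exact (Nat.find_spec (Function.ne_iff.mp hne)) (h _ hlt)

lemma dtheta_le_one {θ : ℝ} (hθ0 : 0 < θ) (hθ1 : θ < 1) (x y : X d) :
    dtheta θ x y ≤ 1 := by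
  simpa using dtheta_le_pow hθ0 hθ1 (m := 0) (fun i hi => absurd hi (Nat.not_lt_zero i))

end Aux
section Aux2
variable {d : ℕ} {θ C : ℝ}

/-- modulus of continuity wrt cylinders -/
def Modl (θ K : ℝ) (h : X d → ℝ) : Prop :=
  ∀ m : ℕ, ∀ x y : X d, Agree m x y → |h x - h y| ≤ K * θ ^ m

lemma LipWrt.mod (hθ0 : 0 < θ) (hθ1 : θ < 1) {K : ℝ} (hK : 0 ≤ K) {h : X d → ℝ}
    (hf : LipWrt θ K h) : Modl θ K h := fun m x y hm =>
  (hf x y).trans (by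
    have := dtheta_le_pow hθ0 hθ1 hm
    exact mul_le_mul_of_nonneg_left this hK)

lemma geom_sum_le_inv (hθ0 : 0 < θ) (hθ1 : θ < 1) (n : ℕ) :
    ∑ i ∈ Finset.range n, θ ^ i ≤ (1 - θ)⁻¹ := by
  have h1 : 0 < 1 - θ := by linarith
  rw [geom_sum_eq hθ1.ne]
  have heq : (θ ^ n - 1) / (θ - 1) = (1 - θ ^ n) * (1 - θ)⁻¹ := by
    rw [← neg_div_neg_eq, div_eq_mul_inv]
    ring_nf
  rw [heq]
  exact mul_le_of_le_one_left (inv_nonneg.2 h1.le) (by nlinarith [pow_nonneg hθ0.le n])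

lemma mod_measurable (hd : 0 < d) (hθ0 : 0 < θ) (hθ1 : θ < 1) {K : ℝ} {h : X d → ℝ}
    (hm : Modl θ K h) : Measurable h := by
  have h0 : Fin d := ⟨0, hd⟩
  set g : ℕ → X d → ℝ := fun n x => h (fun i => if hi : i < n then x i else h0) with hg
  have hgm : ∀ n, Measurable (g n) := by
    intro n
    have : g n = (fun v : Fin n → Fin d => h (fun i => if hi : i < n then v ⟨i, hi⟩ else h0))
        ∘ (fun x (j : Fin n) => x j.1) := rfl
    rw [this]
    exact (Measurable.of_discrete).comp (measurable_pi_lambda _ fun j => measurable_pi_apply _)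
  apply measurable_of_tendsto_metrizable hgm
  rw [tendsto_pi_nhds]
  intro x
  have hb : ∀ n, |g n x - h x| ≤ K * θ ^ n := by
    intro n
    exact hm n _ x (fun i hi => by simp [hi])
  have hlim : Filter.Tendsto (fun n : ℕ => K * θ ^ n) Filter.atTop (nhds 0) := by
    simpa using (tendsto_pow_atTop_nhds_zero_of_lt_one hθ0.le hθ1).const_mul K
  have hb' : ∀ n, ‖g n x - h x‖ ≤ K * θ ^ n := fun n => by
    rw [Real.norm_eq_abs]; exact hb n
  have := squeeze_zero_norm hb' hlim
  have := this.add_const (h x)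
  simpa using this

lemma mod_bounded {K : ℝ} {h : X d → ℝ} (x0 : X d) (hθ0 : 0 < θ) (hm : Modl θ K h) :
    ∀ x, |h x| ≤ |h x0| + K := by
  intro x
  have := hm 0 x x0 (fun i hi => absurd hi (Nat.not_lt_zero i))
  simp only [pow_zero, mul_one] at this
  calc |h x| ≤ |h x - h x0| + |h x0| := by
        simpa using abs_add_le (h x - h x0) (h x0)
    _ ≤ |h x0| + K := by linarith

end Aux2
section MeasPart
variable {d : ℕ} {B : ℝ} {f : X d → ℝ}

lemma ennreal_cancel {a b c : ℝ≥0∞} (hc : c ≠ ⊤) (h : a + c = b + c) : a = b := by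
  rw [add_comm a c, add_comm b c] at h
  exact (ENNReal.add_right_inj hc).mp h

lemma indicator_le_one (s : Set (X d)) (a : X d) : s.indicator (1 : X d → ℝ≥0∞) a ≤ 1 := by
  classical
  by_cases h : a ∈ s
  · simp [Set.indicator_of_mem h]
  · simp [Set.indicator_of_notMem h]

lemma orbit_measure_spec (hmeas : Measurable f) (x : X d) {n : ℕ} (hn : 0 < n)
    (hx : shift^[n] x = x) :
    ∃ μ : Measure (X d), IsProbabilityMeasure μ ∧ μ.map shift = μ ∧
      ∫ y, f y ∂μ = birkhoff f n x / n := by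
  classical
  set ν : Measure (X d) :=
    ((n : ℝ≥0∞))⁻¹ • ∑ i ∈ Finset.range n, Measure.dirac (shift^[i] x) with hν
  have hnn : ((n : ℝ≥0∞)) ≠ 0 := by exact_mod_cast hn.ne'
  refine ⟨ν, ?_, ?_, ?_⟩
  · constructor
    rw [hν, Measure.smul_apply, Measure.finset_sum_apply]
    simp [Measure.dirac_apply_of_mem, Set.mem_univ]
    rw [ENNReal.inv_mul_cancel (by exact_mod_cast hn.ne') (by simp)]
  · ext s hs
    rw [Measure.map_apply measurable_shift hs]
    have hpre : MeasurableSet (shift ⁻¹' s) := measurable_shift hs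
    rw [hν, Measure.smul_apply, Measure.smul_apply, Measure.finset_sum_apply,
      Measure.finset_sum_apply]
    congr 1
    have key : ∀ i, Measure.dirac (shift^[i] x) (shift ⁻¹' s)
        = s.indicator (1 : X d → ℝ≥0∞) (shift^[i+1] x) := by
      intro i
      rw [Measure.dirac_apply' _ hpre]
      have hmem : shift^[i] x ∈ shift ⁻¹' s ↔ shift^[i+1] x ∈ s := by
        rw [Set.mem_preimage, ← Function.iterate_succ_apply' shift i x]
      simp only [Set.indicator_apply, Pi.one_apply]
      exact if_congr hmem rfl rfl
    have key2 : ∀ i, Measure.dirac (shift^[i] x) s = s.indicator (1 : X d → ℝ≥0∞) (shift^[i] x) :=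
      fun i => Measure.dirac_apply' _ hs
    simp_rw [key, key2]
    set g : ℕ → ℝ≥0∞ := fun i => s.indicator (1 : X d → ℝ≥0∞) (shift^[i] x) with hg
    have hgn : g n = g 0 := by simp [hg, hx]
    apply ennreal_cancel (c := g 0) (by
      intro hc
      have := indicator_le_one (d := d) s x
      rw [hg] at hc
      simp only [Function.iterate_zero_apply] at hc
      rw [hc] at this
      exact (by simp : ¬ ((⊤:ℝ≥0∞) ≤ 1)) this)
    calc (∑ i ∈ Finset.range n, g (i+1)) + g 0 = ∑ i ∈ Finset.range (n+1), g i :=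
          (Finset.sum_range_succ' g n).symm
      _ = (∑ i ∈ Finset.range n, g i) + g n := Finset.sum_range_succ g n
      _ = (∑ i ∈ Finset.range n, g i) + g 0 := by rw [hgn]
  · rw [hν, integral_smul_measure, integral_finset_sum_measure
      (fun i _ => (integrable_const (f (shift^[i] x))).congr (ae_eq_dirac f).symm)]
    simp_rw [integral_dirac]
    rw [birkhoff]
    rw [ENNReal.toReal_inv]
    simp [div_eq_inv_mul]

lemma betaSet_bddAbove (hmeas : Measurable f) (hbd : ∀ y, |f y| ≤ B) :
    ∀ r ∈ {r : ℝ | ∃ μ : Measure (X d), IsProbabilityMeasure μ ∧ μ.map shift = μ ∧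
      r = ∫ x, f x ∂μ}, r ≤ B := by
  rintro r ⟨μ, hμ, -, rfl⟩
  have hint : Integrable f μ := by
    refine Integrable.mono' (integrable_const B) hmeas.aestronglyMeasurable ?_
    exact Filter.Eventually.of_forall fun y => by rw [Real.norm_eq_abs]; exact hbd y
  calc ∫ x, f x ∂μ ≤ ∫ _, B ∂μ := integral_mono hint (integrable_const B)
        (fun y => (abs_le.mp (hbd y)).2)
    _ = B := by simp [hμ.measure_univ]

lemma const_point_fixed (hd : 0 < d) : shift (fun _ => (⟨0, hd⟩ : Fin d)) = fun _ => (⟨0, hd⟩ : Fin d) := rfl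

lemma betaSet_nonempty (hd : 0 < d) (f : X d → ℝ) :
    Set.Nonempty {r : ℝ | ∃ μ : Measure (X d), IsProbabilityMeasure μ ∧ μ.map shift = μ ∧
      r = ∫ x, f x ∂μ} := by
  refine ⟨f (fun _ => (⟨0, hd⟩ : Fin d)), Measure.dirac (fun _ => (⟨0, hd⟩ : Fin d)), inferInstance, ?_, ?_⟩
  · rw [Measure.map_dirac' measurable_shift, const_point_fixed hd]
  · rw [integral_dirac]

lemma periodic_birkhoff_le (hd : 0 < d) (hmeas : Measurable f) (hbd : ∀ y, |f y| ≤ B)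
    (x : X d) {n : ℕ} (hn : 0 < n) (hx : shift^[n] x = x) :
    birkhoff f n x ≤ n * beta f := by
  obtain ⟨μ, hp, hinv, hint⟩ := orbit_measure_spec hmeas x hn hx
  have hmem : birkhoff f n x / n ∈ {r : ℝ | ∃ μ : Measure (X d), IsProbabilityMeasure μ ∧
      μ.map shift = μ ∧ r = ∫ x, f x ∂μ} := ⟨μ, hp, hinv, hint.symm⟩
  have hle : birkhoff f n x / n ≤ beta f :=
    le_csSup ⟨B, betaSet_bddAbove hmeas hbd⟩ hmem
  have hn' : (0:ℝ) < n := by exact_mod_cast hn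
  calc birkhoff f n x = n * (birkhoff f n x / n) := by field_simp
    _ ≤ n * beta f := by
        exact mul_le_mul_of_nonneg_left hle hn'.le

lemma beta_le (hmeas : Measurable f) (hbd : ∀ y, |f y| ≤ B) (hd : 0 < d) : beta f ≤ B :=
  csSup_le (betaSet_nonempty hd f) (betaSet_bddAbove hmeas hbd)

end MeasPart
section Mane
variable {d : ℕ} {θ C B : ℝ} {f : X d → ℝ}

lemma sum_pow_tail (hθ0 : 0 < θ) (hθ1 : θ < 1) (n m : ℕ) :
    ∑ i ∈ Finset.range n, θ ^ (m + (n - i)) ≤ θ ^ m * (1 - θ)⁻¹ := by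
  have h1 : ∑ i ∈ Finset.range n, θ ^ (m + (n - i)) = ∑ j ∈ Finset.range n, θ ^ (m + j + 1) := by
    rw [← Finset.sum_range_reflect (fun i => θ ^ (m + (n - i))) n]
    apply Finset.sum_congr rfl
    intro j hj
    rw [Finset.mem_range] at hj
    congr 1
    omega
  rw [h1]
  have h2 : ∀ j, θ ^ (m + j + 1) = θ ^ m * θ ^ j * θ := by
    intro j; rw [pow_add, pow_add, pow_one]
  simp_rw [h2]
  rw [← Finset.sum_mul, ← Finset.mul_sum]
  have h3 : (∑ j ∈ Finset.range n, θ ^ j) ≤ (1 - θ)⁻¹ := geom_sum_le_inv hθ0 hθ1 n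
  have h4 : θ ^ m * (∑ j ∈ Finset.range n, θ ^ j) * θ ≤ θ ^ m * (1 - θ)⁻¹ * 1 := by
    apply mul_le_mul
    · exact mul_le_mul_of_nonneg_left h3 (pow_nonneg hθ0.le m)
    · exact hθ1.le
    · exact hθ0.le
    · have h5 : 0 < 1 - θ := by linarith
      positivity
  simpa using h4

lemma birkhoff_diff_le (hθ0 : 0 < θ) (hθ1 : θ < 1) (hC : 0 ≤ C) (hmod : Modl θ C f)
    {n m : ℕ} {x y : X d}
    (hag : ∀ i < n, Agree (m + (n - i)) (shift^[i] x) (shift^[i] y)) :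
    |birkhoff f n x - birkhoff f n y| ≤ C * θ ^ m * (1 - θ)⁻¹ := by
  rw [birkhoff, birkhoff, ← Finset.sum_sub_distrib]
  calc |∑ i ∈ Finset.range n, (f (shift^[i] x) - f (shift^[i] y))|
      ≤ ∑ i ∈ Finset.range n, |f (shift^[i] x) - f (shift^[i] y)| :=
        Finset.abs_sum_le_sum_abs _ _
    _ ≤ ∑ i ∈ Finset.range n, C * θ ^ (m + (n - i)) := by
        apply Finset.sum_le_sum
        intro i hi
        rw [Finset.mem_range] at hi
        exact hmod _ _ _ (hag i hi)
    _ = C * ∑ i ∈ Finset.range n, θ ^ (m + (n - i)) := by rw [Finset.mul_sum]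
    _ ≤ C * (θ ^ m * (1 - θ)⁻¹) := mul_le_mul_of_nonneg_left (sum_pow_tail hθ0 hθ1 n m) hC
    _ = C * θ ^ m * (1 - θ)⁻¹ := by ring

def paths (f : X d → ℝ) (x : X d) : Set ℝ :=
  {r | ∃ n : ℕ, ∃ y : X d, 0 < n ∧ shift^[n] y = x ∧ r = birkhoff f n y - n * beta f}

def uFn (f : X d → ℝ) (x : X d) : ℝ := sSup (paths f x)

def consX {d : ℕ} (hd : 0 < d) (x : X d) : X d :=
  fun i => match i with
  | 0 => (⟨0, hd⟩ : Fin d)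
  | (j+1) => x j

lemma shift_consX (hd : 0 < d) (x : X d) : shift^[1] (consX hd x) = x := rfl

lemma paths_nonempty (hd : 0 < d) (x : X d) : (paths f x).Nonempty :=
  ⟨birkhoff f 1 (consX hd x) - 1 * beta f, 1, consX hd x, one_pos, shift_consX hd x, by norm_num⟩

lemma iter_eq_coord {n : ℕ} {y x : X d} (h : shift^[n] y = x) : ∀ k, y (k + n) = x k := by
  intro k
  rw [← h, shift_iter_apply]

lemma paths_bddAbove (hd : 0 < d) (hθ0 : 0 < θ) (hθ1 : θ < 1) (hC : 0 ≤ C)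
    (hmod : Modl θ C f) (hmeas : Measurable f) (hbd : ∀ y, |f y| ≤ B) (x : X d) :
    ∀ r ∈ paths f x, r ≤ C * (1 - θ)⁻¹ := by
  rintro r ⟨n, y, hn, hy, rfl⟩
  set p : X d := fun i => y (i % n) with hp
  have hpper : shift^[n] p = p := by
    funext j
    rw [shift_iter_apply, hp]
    simp [Nat.add_mod_right]
  have hag : ∀ i < n, Agree (0 + (n - i)) (shift^[i] y) (shift^[i] p) := by
    intro i hi j hj
    rw [shift_iter_apply, shift_iter_apply, hp]
    simp only []
    rw [Nat.mod_eq_of_lt (by omega)]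
  have hdiff := birkhoff_diff_le hθ0 hθ1 hC hmod hag
  have hper := periodic_birkhoff_le hd hmeas hbd p hn hpper
  have h1 : birkhoff f n y ≤ birkhoff f n p + C * θ ^ 0 * (1 - θ)⁻¹ := by
    have := (abs_le.mp hdiff).2
    linarith
  simp only [pow_zero, mul_one] at h1
  linarith

lemma uFn_le (hd : 0 < d) (hθ0 : 0 < θ) (hθ1 : θ < 1) (hC : 0 ≤ C)
    (hmod : Modl θ C f) (hmeas : Measurable f) (hbd : ∀ y, |f y| ≤ B) (x : X d) :
    uFn f x ≤ C * (1 - θ)⁻¹ :=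
  csSup_le (paths_nonempty hd x) (paths_bddAbove hd hθ0 hθ1 hC hmod hmeas hbd x)

lemma uFn_bddAbove (hd : 0 < d) (hθ0 : 0 < θ) (hθ1 : θ < 1) (hC : 0 ≤ C)
    (hmod : Modl θ C f) (hmeas : Measurable f) (hbd : ∀ y, |f y| ≤ B) (x : X d) :
    BddAbove (paths f x) :=
  ⟨C * (1 - θ)⁻¹, paths_bddAbove hd hθ0 hθ1 hC hmod hmeas hbd x⟩

lemma uFn_ge (hd : 0 < d) (hθ0 : 0 < θ) (hθ1 : θ < 1) (hC : 0 ≤ C)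
    (hmod : Modl θ C f) (hmeas : Measurable f) (hbd : ∀ y, |f y| ≤ B) (x : X d) :
    -B - beta f ≤ uFn f x := by
  have hmem : birkhoff f 1 (consX hd x) - 1 * beta f ∈ paths f x :=
    ⟨1, consX hd x, one_pos, shift_consX hd x, by norm_num⟩
  have h1 : birkhoff f 1 (consX hd x) - 1 * beta f ≤ uFn f x :=
    le_csSup (uFn_bddAbove hd hθ0 hθ1 hC hmod hmeas hbd x) hmem
  have h2 : birkhoff f 1 (consX hd x) = f (consX hd x) := by
    simp [birkhoff]
  have := (abs_le.mp (hbd (consX hd x))).1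
  rw [h2] at h1
  linarith

lemma uFn_cocycle (hd : 0 < d) (hθ0 : 0 < θ) (hθ1 : θ < 1) (hC : 0 ≤ C)
    (hmod : Modl θ C f) (hmeas : Measurable f) (hbd : ∀ y, |f y| ≤ B) (z : X d) :
    uFn f z + f z - beta f ≤ uFn f (shift z) := by
  have key : ∀ r ∈ paths f z, r ≤ uFn f (shift z) - f z + beta f := by
    rintro r ⟨n, y, hn, hy, rfl⟩
    have hmem : birkhoff f (n+1) y - (n+1 : ℕ) * beta f ∈ paths f (shift z) := by
      refine ⟨n+1, y, Nat.succ_pos n, ?_, rfl⟩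
      rw [Function.iterate_succ_apply', hy]
    have h1 : birkhoff f (n+1) y - ((n+1 : ℕ) : ℝ) * beta f ≤ uFn f (shift z) :=
      le_csSup (uFn_bddAbove hd hθ0 hθ1 hC hmod hmeas hbd (shift z)) hmem
    have h2 : birkhoff f (n+1) y = birkhoff f n y + f z := by
      rw [birkhoff, birkhoff, Finset.sum_range_succ, hy]
    rw [h2] at h1
    push_cast at h1 ⊢
    linarith
  have h4 : uFn f z ≤ uFn f (shift z) - f z + beta f := csSup_le (paths_nonempty hd z) key
  linarith

lemma uFn_mod (hd : 0 < d) (hθ0 : 0 < θ) (hθ1 : θ < 1) (hC : 0 ≤ C)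
    (hmod : Modl θ C f) (hmeas : Measurable f) (hbd : ∀ y, |f y| ≤ B) :
    Modl θ (C * (1 - θ)⁻¹) (uFn f) := by
  have key : ∀ (m : ℕ) (x x' : X d), Agree m x x' →
      uFn f x ≤ uFn f x' + C * (1 - θ)⁻¹ * θ ^ m := by
    intro m x x' hag
    apply csSup_le (paths_nonempty hd x)
    rintro r ⟨n, y, hn, hy, rfl⟩
    classical
    set y' : X d := fun i => if h : i < n then y i else x' (i - n) with hy'
    have hy'n : shift^[n] y' = x' := by
      funext j
      rw [shift_iter_apply, hy']
      simp only []
      rw [dif_neg (by omega)]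
      congr 1
      omega
    have hyc := iter_eq_coord hy
    have hag2 : ∀ i < n, Agree (m + (n - i)) (shift^[i] y) (shift^[i] y') := by
      intro i hi j hj
      rw [shift_iter_apply, shift_iter_apply, hy']
      simp only []
      by_cases h : j + i < n
      · rw [dif_pos h]
      · rw [dif_neg h]
        have h3 : y (j + i) = x (j + i - n) := by
          rw [← hyc (j + i - n)]
          congr 1
          omega
        rw [h3]
        exact hag _ (by omega)
    have hdiff := birkhoff_diff_le hθ0 hθ1 hC hmod hag2
    have hmem : birkhoff f n y' - n * beta f ∈ paths f x' := ⟨n, y', hn, hy'n, rfl⟩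
    have h1 : birkhoff f n y' - (n : ℝ) * beta f ≤ uFn f x' :=
      le_csSup (uFn_bddAbove hd hθ0 hθ1 hC hmod hmeas hbd x') hmem
    have h2 := (abs_le.mp hdiff).2
    have h3 : C * θ ^ m * (1 - θ)⁻¹ = C * (1 - θ)⁻¹ * θ ^ m := by ring
    rw [h3] at h2
    linarith
  intro m x x' hag
  have hag' : Agree m x' x := fun i hi => (hag i hi).symm
  have h1 := key m x x' hag
  have h2 := key m x' x hag'
  rw [abs_sub_le_iff]
  constructor <;> linarith

end Mane
section Gpart
variable {d : ℕ} {θ C B : ℝ} {f : X d → ℝ}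

def gFn (f : X d → ℝ) (z : X d) : ℝ := beta f - f z + uFn f (shift z) - uFn f z

lemma gFn_nonneg (hd : 0 < d) (hθ0 : 0 < θ) (hθ1 : θ < 1) (hC : 0 ≤ C)
    (hmod : Modl θ C f) (hmeas : Measurable f) (hbd : ∀ y, |f y| ≤ B) (z : X d) :
    0 ≤ gFn f z := by
  have := uFn_cocycle hd hθ0 hθ1 hC hmod hmeas hbd (B := B) z
  rw [gFn]
  linarith

lemma agree_shift {m : ℕ} {x y : X d} (h : Agree m x y) : Agree (m - 1) (shift x) (shift y) := by
  intro i hi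
  exact h (i + 1) (by omega)

lemma pow_pred_le (hθ0 : 0 < θ) (hθ1 : θ < 1) (m : ℕ) : θ ^ (m - 1) ≤ θ ^ m * θ⁻¹ := by
  cases m with
  | zero =>
    have h2 := mul_inv_cancel₀ hθ0.ne'
    have h3 : 0 < θ⁻¹ := inv_pos.2 hθ0
    have h : 1 ≤ θ⁻¹ := by nlinarith
    simpa using h
  | succ k =>
    simp only [Nat.add_sub_cancel]
    rw [pow_succ, mul_assoc, mul_inv_cancel₀ hθ0.ne', mul_one]

lemma uFn_abs_le (hd : 0 < d) (hθ0 : 0 < θ) (hθ1 : θ < 1) (hC : 0 ≤ C)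
    (hmod : Modl θ C f) (hmeas : Measurable f) (hbd : ∀ y, |f y| ≤ B) (x : X d) :
    |uFn f x| ≤ C * (1 - θ)⁻¹ + B + |beta f| := by
  have h1 := uFn_le hd hθ0 hθ1 hC hmod hmeas hbd (B := B) x
  have h2 := uFn_ge hd hθ0 hθ1 hC hmod hmeas hbd x
  have h3 : 0 ≤ C * (1 - θ)⁻¹ := by
    have : 0 < 1 - θ := by linarith
    positivity
  have h4 : 0 ≤ B := le_trans (abs_nonneg _) (hbd x)
  have h5 := neg_abs_le (beta f)
  have h6 := le_abs_self (beta f)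
  rw [abs_le]
  constructor <;> linarith

lemma gFn_mod (hd : 0 < d) (hθ0 : 0 < θ) (hθ1 : θ < 1) (hC : 0 ≤ C)
    (hmod : Modl θ C f) (hmeas : Measurable f) (hbd : ∀ y, |f y| ≤ B) :
    Modl θ (C + C * (1 - θ)⁻¹ + C * (1 - θ)⁻¹ * θ⁻¹) (gFn f) := by
  intro m x y hag
  have humod := uFn_mod hd hθ0 hθ1 hC hmod hmeas hbd (B := B)
  have h1 := hmod m x y hag
  have h2 := humod m x y hag
  have h3 := humod (m - 1) (shift x) (shift y) (agree_shift hag)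
  have h4 : 0 ≤ C * (1 - θ)⁻¹ := by
    have : 0 < 1 - θ := by linarith
    positivity
  have h5 : C * (1 - θ)⁻¹ * θ ^ (m - 1) ≤ C * (1 - θ)⁻¹ * θ⁻¹ * θ ^ m := by
    have := pow_pred_le hθ0 hθ1 m
    calc C * (1 - θ)⁻¹ * θ ^ (m - 1) ≤ C * (1 - θ)⁻¹ * (θ ^ m * θ⁻¹) :=
          mul_le_mul_of_nonneg_left this h4
      _ = C * (1 - θ)⁻¹ * θ⁻¹ * θ ^ m := by ring
  have h6 := (abs_sub_le_iff.mp h1)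
  have h7 := (abs_sub_le_iff.mp h2)
  have h8 := (abs_sub_le_iff.mp h3)
  rw [gFn, gFn, abs_sub_le_iff]
  constructor <;> [skip; skip] <;>
    · obtain ⟨h6a, h6b⟩ := h6
      obtain ⟨h7a, h7b⟩ := h7
      obtain ⟨h8a, h8b⟩ := h8
      nlinarith [h5]

lemma gFn_measurable (hd : 0 < d) (hθ0 : 0 < θ) (hθ1 : θ < 1) (hC : 0 ≤ C)
    (hmod : Modl θ C f) (hmeas : Measurable f) (hbd : ∀ y, |f y| ≤ B) :
    Measurable (gFn f) := by
  have humeas : Measurable (uFn f) :=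
    mod_measurable hd hθ0 hθ1 (uFn_mod hd hθ0 hθ1 hC hmod hmeas hbd (B := B))
  exact (((measurable_const.sub hmeas).add (humeas.comp measurable_shift)).sub humeas)

lemma gFn_bound (hd : 0 < d) (hθ0 : 0 < θ) (hθ1 : θ < 1) (hC : 0 ≤ C)
    (hmod : Modl θ C f) (hmeas : Measurable f) (hbd : ∀ y, |f y| ≤ B) (z : X d) :
    |gFn f z| ≤ |beta f| + B + 2 * (C * (1 - θ)⁻¹ + B + |beta f|) := by
  have h1 := uFn_abs_le hd hθ0 hθ1 hC hmod hmeas hbd (shift z)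
  have h2 := uFn_abs_le hd hθ0 hθ1 hC hmod hmeas hbd z
  have h3 := hbd z
  rw [gFn]
  rw [abs_le] at *
  have h5 := neg_abs_le (beta f)
  have h6 := le_abs_self (beta f)
  constructor <;> linarith

lemma gFn_telescope {n : ℕ} {y : X d} (hy : shift^[n] y = y) :
    birkhoff (gFn f) n y = n * beta f - birkhoff f n y := by
  have key : ∀ i, gFn f (shift^[i] y)
      = (beta f - f (shift^[i] y)) + (uFn f (shift^[i+1] y) - uFn f (shift^[i] y)) := by
    intro i
    rw [gFn, Function.iterate_succ_apply' shift i y]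
    ring
  rw [birkhoff]
  simp_rw [key]
  rw [Finset.sum_add_distrib, Finset.sum_range_sub (fun i => uFn f (shift^[i] y)), hy]
  rw [Finset.sum_sub_distrib, Finset.sum_const, Finset.card_range]
  rw [← birkhoff]
  simp

end Gpart
section IntPart
variable {d : ℕ} {θ C B : ℝ} {f : X d → ℝ}

lemma integrable_of_bound {h : X d → ℝ} {M : ℝ} (hmeas : Measurable h)
    (hb : ∀ x, |h x| ≤ M) {μ : Measure (X d)} [IsProbabilityMeasure μ] :
    Integrable h μ := by
  refine Integrable.mono' (integrable_const M) hmeas.aestronglyMeasurable ?_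
  exact Filter.Eventually.of_forall fun y => by rw [Real.norm_eq_abs]; exact hb y

lemma map_iterate_eq {μ : Measure (X d)} (hinv : μ.map shift = μ) (i : ℕ) :
    μ.map (shift^[i]) = μ := by
  induction i with
  | zero => simp [Measure.map_id]
  | succ i ih =>
    rw [Function.iterate_succ']
    rw [← Measure.map_map measurable_shift (measurable_shift.iterate i), ih, hinv]

lemma integral_comp_iterate {μ : Measure (X d)} [IsProbabilityMeasure μ]
    (hinv : μ.map shift = μ) {h : X d → ℝ} (hmeas : Measurable h) (i : ℕ) :
    ∫ x, h (shift^[i] x) ∂μ = ∫ x, h x ∂μ := by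
  rw [← integral_map (measurable_shift.iterate i).aemeasurable
    hmeas.aestronglyMeasurable (f := h), map_iterate_eq hinv i]

lemma integral_gFn (hd : 0 < d) (hθ0 : 0 < θ) (hθ1 : θ < 1) (hC : 0 ≤ C)
    (hmod : Modl θ C f) (hmeas : Measurable f) (hbd : ∀ y, |f y| ≤ B)
    {μ : Measure (X d)} [IsProbabilityMeasure μ] (hinv : μ.map shift = μ) :
    ∫ x, gFn f x ∂μ = beta f - ∫ x, f x ∂μ := by
  have humeas : Measurable (uFn f) :=
    mod_measurable hd hθ0 hθ1 (uFn_mod hd hθ0 hθ1 hC hmod hmeas hbd (B := B))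
  have hubd := uFn_abs_le hd hθ0 hθ1 hC hmod hmeas hbd (B := B)
  have hintf : Integrable f μ := integrable_of_bound hmeas hbd
  have hintu : Integrable (uFn f) μ := integrable_of_bound humeas hubd
  have hintus : Integrable (fun x => uFn f (shift x)) μ :=
    integrable_of_bound (humeas.comp measurable_shift) (fun x => hubd (shift x))
  have husigma : ∫ x, uFn f (shift x) ∂μ = ∫ x, uFn f x ∂μ := by
    have := integral_comp_iterate hinv humeas 1
    simpa using this
  have heq : (fun x => gFn f x) = fun x =>
      ((beta f - f x) + uFn f (shift x)) - uFn f x := by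
    funext x; rw [gFn]
  have hint2 : Integrable (fun x => beta f - f x) μ := by
    refine integrable_of_bound (measurable_const.sub hmeas) (M := |beta f| + B) ?_
    intro x
    have h6 := le_abs_self (beta f)
    have h5 := neg_abs_le (beta f)
    have h7 := abs_le.mp (hbd x)
    rw [Pi.sub_apply, abs_le]
    constructor <;> [linarith [h7.2]; linarith [h7.1]]
  have hint1 : Integrable (fun x => (beta f - f x) + uFn f (shift x)) μ := hint2.add hintus
  rw [heq, integral_sub hint1 hintu, integral_add hint2 hintus,
    integral_sub (integrable_const (beta f)) hintf, husigma]
  simp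

lemma exists_point_small (hd : 0 < d) (hθ0 : 0 < θ) (hθ1 : θ < 1) (hC : 0 ≤ C)
    (hmod : Modl θ C f) (hmeas : Measurable f) (hbd : ∀ y, |f y| ≤ B)
    {μ : Measure (X d)} (hp : IsProbabilityMeasure μ) (hinv : μ.map shift = μ)
    (N : ℕ) {c : ℝ} (hlt : (N : ℝ) * (beta f - ∫ x, f x ∂μ) < c) :
    ∃ x : X d, birkhoff (gFn f) N x < c := by
  have hgmeas := gFn_measurable hd hθ0 hθ1 hC hmod hmeas hbd (B := B)
  have hgbd := gFn_bound hd hθ0 hθ1 hC hmod hmeas hbd (B := B)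
  by_contra hcon
  push_neg at hcon
  have hint : ∀ i : ℕ, Integrable (fun x => gFn f (shift^[i] x)) μ :=
    fun i => integrable_of_bound (hgmeas.comp (measurable_shift.iterate i))
      (fun x => hgbd (shift^[i] x))
  have hintb : Integrable (birkhoff (gFn f) N) μ := by
    have : birkhoff (gFn f) N = fun x => ∑ i ∈ Finset.range N, gFn f (shift^[i] x) := by
      funext x; rw [birkhoff]
    rw [this]
    exact integrable_finset_sum _ (fun i _ => hint i)
  have hval : ∫ x, birkhoff (gFn f) N x ∂μ = (N : ℝ) * (beta f - ∫ x, f x ∂μ) := by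
    have h1 : ∫ x, birkhoff (gFn f) N x ∂μ
        = ∑ i ∈ Finset.range N, ∫ x, gFn f (shift^[i] x) ∂μ := by
      rw [show (fun x => birkhoff (gFn f) N x)
          = fun x => ∑ i ∈ Finset.range N, gFn f (shift^[i] x) from rfl]
      exact integral_finset_sum _ (fun i _ => hint i)
    rw [h1]
    have h2 : ∀ i ∈ Finset.range N, ∫ x, gFn f (shift^[i] x) ∂μ
        = beta f - ∫ x, f x ∂μ := by
      intro i _
      rw [integral_comp_iterate hinv hgmeas i,
        integral_gFn hd hθ0 hθ1 hC hmod hmeas hbd hinv]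
    rw [Finset.sum_congr rfl h2, Finset.sum_const, Finset.card_range, nsmul_eq_mul]
  have hc : c ≤ ∫ x, birkhoff (gFn f) N x ∂μ := by
    calc c = ∫ _, c ∂μ := by simp
      _ ≤ ∫ x, birkhoff (gFn f) N x ∂μ :=
        integral_mono (integrable_const c) hintb hcon
  rw [hval] at hc
  linarith

end IntPart
section Pigeon
variable {d : ℕ} {θ C B : ℝ} {f : X d → ℝ}

lemma exists_block_repeat (x : X d) (m : ℕ) :
    ∃ i j : ℕ, i < j ∧ j ≤ d ^ m ∧ ∀ k < m, x (i + k) = x (j + k) := by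
  classical
  have hcard : (Finset.univ : Finset (Fin m → Fin d)).card < (Finset.range (d ^ m + 1)).card := by
    simp [Finset.card_range, Fintype.card_fun]
  obtain ⟨a, ha, b, hb, hne, heq⟩ :=
    Finset.exists_ne_map_eq_of_card_lt_of_maps_to hcard
      (f := fun i (k : Fin m) => x (i + (k : ℕ))) (fun a _ => Finset.mem_univ _)
  rw [Finset.mem_range] at ha hb
  rcases lt_or_gt_of_ne hne with h | h
  · exact ⟨a, b, h, by omega, fun k hk => congrFun heq ⟨k, hk⟩⟩
  · exact ⟨b, a, h, by omega, fun k hk => (congrFun heq ⟨k, hk⟩).symm⟩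

lemma mod_z_agree {p m : ℕ} {z : X d} (hp : 0 < p) (hper : ∀ k < m, z (k + p) = z k) :
    ∀ t < p + m, z (t % p) = z t := by
  intro t
  induction t using Nat.strong_induction_on with
  | _ t ih =>
    intro ht
    by_cases h : t < p
    · rw [Nat.mod_eq_of_lt h]
    · have h2 : z ((t - p) + p) = z (t - p) := hper (t - p) (by omega)
      have h4 : z t = z (t - p) := by
        rw [← h2]
        congr 1
        omega
      have h3 : z (t % p) = z ((t - p) % p) := by rw [Nat.mod_eq_sub_mod (by omega)]
      rw [h3, ih (t - p) (by omega) (by omega)]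
      exact h4.symm

lemma periodize_periodic {p : ℕ} (hp : 0 < p) (z : X d) :
    shift^[p] (fun t => z (t % p)) = (fun t => z (t % p)) := by
  funext j
  rw [shift_iter_apply]
  simp [Nat.add_mod_right]

lemma periodize_birkhoff_le (hθ0 : 0 < θ) (hθ1 : θ < 1) {K : ℝ} (hK : 0 ≤ K)
    {h : X d → ℝ} (hmod : Modl θ K h) {z : X d} {p m : ℕ} (hp : 0 < p)
    (hper : ∀ k < m, z (k + p) = z k) :
    birkhoff h p (fun t => z (t % p)) ≤ birkhoff h p z + K * θ ^ m * (1 - θ)⁻¹ := by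
  set y : X d := fun t => z (t % p) with hy
  have hz := mod_z_agree hp hper
  have hag : ∀ i < p, Agree (m + (p - i)) (shift^[i] y) (shift^[i] z) := by
    intro i hi j hj
    rw [shift_iter_apply, shift_iter_apply, hy]
    exact hz (j + i) (by omega)
  have hdiff := birkhoff_diff_le hθ0 hθ1 hK hmod hag
  have := (abs_le.mp hdiff).2
  linarith

lemma birkhoff_window_le {h : X d → ℝ} (hnn : ∀ y, 0 ≤ h y) {x : X d} {i p N : ℕ}
    (hiN : i + p ≤ N) :
    birkhoff h p (shift^[i] x) ≤ birkhoff h N x := by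
  rw [birkhoff, birkhoff]
  have h1 : ∀ k, h (shift^[k] (shift^[i] x)) = h (shift^[k + i] x) := by
    intro k
    rw [Function.iterate_add_apply]
  simp_rw [h1]
  have h2 : ∑ k ∈ Finset.range p, h (shift^[k + i] x)
      = ∑ k ∈ Finset.Ico i (i + p), h (shift^[k] x) := by
    rw [Finset.sum_Ico_eq_sum_range]
    simp only [Nat.add_sub_cancel_left]
    apply Finset.sum_congr rfl
    intro k _
    rw [Nat.add_comm]
  rw [h2]
  apply Finset.sum_le_sum_of_subset_of_nonneg
  · intro k hk
    exact Finset.mem_range.mpr (lt_of_lt_of_le (Finset.mem_Ico.mp hk).2 hiN)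
  · intro k _ _
    exact hnn _

end Pigeon
theorem stmt0 (d : ℕ) (hd : 0 < d) (θ C : ℝ) (hθ0 : 0 < θ) (hθ1 : θ < 1)
    (f : X d → ℝ) (hf : LipWrt θ C f) :
    sInf {r : ℝ | ∃ x : X d, IsPeriodic x ∧ r = Ifun f x} = 0 := by
  classical
  set C' : ℝ := max C 0 with hC'
  have hC'0 : 0 ≤ C' := le_max_right C 0
  have hf' : LipWrt θ C' f := fun x y =>
    (hf x y).trans (mul_le_mul_of_nonneg_right (le_max_left C 0) (dtheta_nonneg hθ0 x y))
  have hmod : Modl θ C' f := hf'.mod hθ0 hθ1 hC'0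
  have hmeas : Measurable f := mod_measurable hd hθ0 hθ1 hmod
  set x0 : X d := fun _ => (⟨0, hd⟩ : Fin d) with hx0
  set B : ℝ := |f x0| + C' with hB
  have hbd : ∀ x, |f x| ≤ B := mod_bounded x0 hθ0 hmod
  set S := {r : ℝ | ∃ x : X d, IsPeriodic x ∧ r = Ifun f x} with hS
  have hS0 : ∀ r ∈ S, 0 ≤ r := by
    rintro r ⟨x, ⟨n, hn, hx⟩, rfl⟩
    have hmin : 0 < minPer x := Function.IsPeriodicPt.minimalPeriod_pos hn hx
    have hfix : shift^[minPer x] x = x := Function.isPeriodicPt_minimalPeriod shift x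
    have := periodic_birkhoff_le hd hmeas hbd x hmin hfix
    rw [Ifun]
    linarith
  have hbelow : BddBelow S := ⟨0, hS0⟩
  have hSne : S.Nonempty := by
    refine ⟨Ifun f x0, x0, ⟨1, one_pos, ?_⟩, rfl⟩
    simp only [Function.iterate_one]
    rfl
  have key : ∀ ε > 0, ∃ r ∈ S, r < ε := by
    intro ε hε
    have h1θ : 0 < 1 - θ := by linarith
    set Cg : ℝ := C' + C' * (1 - θ)⁻¹ + C' * (1 - θ)⁻¹ * θ⁻¹ with hCgdef
    have hgmod : Modl θ Cg (gFn f) := gFn_mod hd hθ0 hθ1 hC'0 hmod hmeas hbd (B := B)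
    have hgnn : ∀ z, 0 ≤ gFn f z := gFn_nonneg hd hθ0 hθ1 hC'0 hmod hmeas hbd (B := B)
    have hCg0 : 0 ≤ Cg := by
      have h2 : 0 ≤ C' * (1 - θ)⁻¹ := by positivity
      have h3 : 0 ≤ C' * (1 - θ)⁻¹ * θ⁻¹ := by positivity
      rw [hCgdef]
      linarith
    have htend : Filter.Tendsto (fun m : ℕ => Cg * θ ^ m * (1 - θ)⁻¹)
        Filter.atTop (nhds 0) := by
      have h := tendsto_pow_atTop_nhds_zero_of_lt_one hθ0.le hθ1
      have h2 := (h.const_mul Cg).mul_const (1 - θ)⁻¹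
      simpa using h2
    obtain ⟨m, hm⟩ := (htend.eventually_lt_const (by linarith : (0:ℝ) < ε / 2)).exists
    set N : ℕ := d ^ m with hN
    have hN0 : 0 < N := pow_pos hd m
    have hNR : (0:ℝ) < N := by exact_mod_cast hN0
    have hlt : beta f - ε / (2 * N) < beta f := by
      have : 0 < ε / (2 * N) := by positivity
      linarith
    obtain ⟨r0, hr0mem, hr0⟩ := exists_lt_of_lt_csSup (betaSet_nonempty hd f) hlt
    obtain ⟨μ, hprob, hinv, rfl⟩ := hr0mem
    have hsmall : (N : ℝ) * (beta f - ∫ x, f x ∂μ) < ε / 2 := by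
      have h1 : beta f - ∫ x, f x ∂μ < ε / (2 * N) := by linarith
      calc (N : ℝ) * (beta f - ∫ x, f x ∂μ) < (N : ℝ) * (ε / (2 * N)) :=
            mul_lt_mul_of_pos_left h1 hNR
        _ = ε / 2 := by
            field_simp
    obtain ⟨x, hx⟩ := exists_point_small hd hθ0 hθ1 hC'0 hmod hmeas hbd hprob hinv N hsmall
    obtain ⟨i, j, hij, hjN, hblk⟩ := exists_block_repeat x m
    set p : ℕ := j - i with hpdef
    have hp0 : 0 < p := by omega
    set z : X d := shift^[i] x with hz
    have hper : ∀ k < m, z (k + p) = z k := by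
      intro k hk
      rw [hz, shift_iter_apply, shift_iter_apply]
      have h1 : k + p + i = j + k := by omega
      have h2 : k + i = i + k := by omega
      rw [h1, h2]
      exact (hblk k hk).symm
    set y : X d := fun t => z (t % p) with hy
    have hyper : shift^[p] y = y := periodize_periodic hp0 z
    have hgest : birkhoff (gFn f) p y ≤ birkhoff (gFn f) p z + Cg * θ ^ m * (1 - θ)⁻¹ :=
      periodize_birkhoff_le hθ0 hθ1 hCg0 hgmod hp0 hper
    have hwin : birkhoff (gFn f) p z ≤ birkhoff (gFn f) N x :=
      birkhoff_window_le hgnn (by omega : i + p ≤ N)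
    have hmin0 : 0 < minPer y := Function.IsPeriodicPt.minimalPeriod_pos hp0 hyper
    have hminle : minPer y ≤ p := Function.IsPeriodicPt.minimalPeriod_le hp0 hyper
    have hminfix : shift^[minPer y] y = y := Function.isPeriodicPt_minimalPeriod shift y
    have hIy : Ifun f y = birkhoff (gFn f) (minPer y) y := by
      rw [Ifun, gFn_telescope hminfix]
    have hmono : birkhoff (gFn f) (minPer y) y ≤ birkhoff (gFn f) p y := by
      rw [birkhoff, birkhoff]
      apply Finset.sum_le_sum_of_subset_of_nonneg
      · intro k hk
        rw [Finset.mem_range] at *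
        omega
      · intro k _ _
        exact hgnn _
    refine ⟨Ifun f y, ⟨y, ⟨p, hp0, hyper⟩, rfl⟩, ?_⟩
    calc Ifun f y ≤ birkhoff (gFn f) p y := by rw [hIy]; exact hmono
      _ ≤ birkhoff (gFn f) p z + Cg * θ ^ m * (1 - θ)⁻¹ := hgest
      _ ≤ birkhoff (gFn f) N x + Cg * θ ^ m * (1 - θ)⁻¹ := by linarith
      _ < ε / 2 + ε / 2 := by linarith [hm, hx]
      _ = ε := by ring
  apply le_antisymm
  · by_contra hcon
    push_neg at hcon
    obtain ⟨r, hrS, hrlt⟩ := key (sInf S) hcon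
    exact absurd (csInf_le hbelow hrS) (not_le.mpr hrlt)
  · exact le_csInf hSne hS0
end
end

section
/- Suppose f > 0 is Lipschitz on X. Then any weak* accumulation point of the zeta probabilities μ_{c,s} as c → ∞ and s → 1 is an f-maximizing measure, i.e., satisfies ∫ f dμ = β(f). -/
open MeasureTheory Filter Real Topology
open scoped ENNReal

noncomputable section

namespace Stmt5Aux
variable {d : ℕ}

lemma shift_iter_apply (x : X d) (k i : ℕ) : (shift^[k] x) i = x (i + k) := by
  induction k generalizing x i with
  | zero => rfl
  | succ k ih =>
    rw [Function.iterate_succ_apply, ih, shift]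
    ring_nf

lemma periodize_apply (n : ℕ) (w : Fin (n + 1) → Fin d) (i : ℕ) :
    periodize n w i = w ⟨i % (n + 1), Nat.mod_lt i (Nat.succ_pos n)⟩ := rfl

lemma periodize_apply_lt (n : ℕ) (w : Fin (n + 1) → Fin d) (i : ℕ) (h : i < n + 1) :
    periodize n w i = w ⟨i, h⟩ := by
  rw [periodize_apply]
  congr 1
  exact Fin.ext (Nat.mod_eq_of_lt h)

lemma shift_iter_periodize (n : ℕ) (w : Fin (n + 1) → Fin d) :
    shift^[n + 1] (periodize n w) = periodize n w := by
  funext i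
  rw [shift_iter_apply, periodize_apply, periodize_apply]
  congr 1
  exact Fin.ext (by simp [Nat.add_mod_right])

lemma birkhoff_add_apply (f : X d → ℝ) (m n : ℕ) (x : X d) :
    birkhoff f (m + n) x = birkhoff f m x + birkhoff f n (shift^[m] x) := by
  unfold birkhoff
  rw [Finset.sum_range_add]
  congr 1
  refine Finset.sum_congr rfl fun i _ => ?_
  rw [← Function.iterate_add_apply, Nat.add_comm]

lemma birkhoff_one (f : X d → ℝ) (x : X d) : birkhoff f 1 x = f x := by
  simp [birkhoff]

lemma birkhoff_const (r : ℝ) (n : ℕ) (x : X d) : birkhoff (fun _ => r) n x = n * r := by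
  simp [birkhoff, mul_comm]

lemma birkhoff_mul (c : ℝ) (f : X d → ℝ) (n : ℕ) (x : X d) :
    birkhoff (fun y => c * f y) n x = c * birkhoff f n x := by
  simp [birkhoff, Finset.mul_sum]

lemma birkhoff_le (f : X d → ℝ) (M : ℝ) (hM : ∀ y, f y ≤ M) (n : ℕ) (x : X d) :
    birkhoff f n x ≤ n * M := by
  calc birkhoff f n x ≤ ∑ _i ∈ Finset.range n, M := Finset.sum_le_sum fun i _ => hM _
  _ = n * M := by simp [mul_comm]

lemma le_birkhoff (f : X d → ℝ) (M : ℝ) (hM : ∀ y, M ≤ f y) (n : ℕ) (x : X d) :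
    (n : ℝ) * M ≤ birkhoff f n x := by
  calc ((n : ℝ)) * M = ∑ _i ∈ Finset.range n, M := by simp [mul_comm]
  _ ≤ birkhoff f n x := Finset.sum_le_sum fun i _ => hM _

lemma continuous_shift : Continuous (shift (d := d)) :=
  continuous_pi fun m => continuous_apply (m + 1)

lemma continuous_birkhoff {f : X d → ℝ} (hf : Continuous f) (n : ℕ) :
    Continuous (birkhoff f n) := by
  unfold birkhoff
  exact continuous_finset_sum _ fun i _ => hf.comp (continuous_shift.iterate i)

lemma measurable_shift : Measurable (shift (d := d)) :=
  continuous_shift.measurable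

end Stmt5Aux

namespace Stmt5Aux
variable {d : ℕ}

/-- pointwise distortion: agreement on first k coordinates -/
lemma f_dist {θ C : ℝ} (hθ0 : 0 < θ) (hθ1 : θ < 1) {f : X d → ℝ} (hf : LipWrt θ C f)
    (hC : 0 ≤ C) (x y : X d) (k : ℕ) (hagree : ∀ j, j < k → x j = y j) :
    |f x - f y| ≤ C * θ ^ k := by
  by_cases hxy : x = y
  · subst hxy
    simp only [sub_self, abs_zero]
    positivity
  · have h := hf x y
    have hdd : dtheta θ x y = θ ^ Nat.find (Function.ne_iff.mp hxy) := by
      simp only [dtheta]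
      exact dif_neg hxy
    have hk : k ≤ Nat.find (Function.ne_iff.mp hxy) := by
      refine Nat.le_find_iff _ _ |>.mpr fun m hm => ?_
      simp only [ne_eq, not_not]
      exact hagree m hm
    calc |f x - f y| ≤ C * θ ^ Nat.find (Function.ne_iff.mp hxy) := hdd ▸ h
    _ ≤ C * θ ^ k := by
        have := pow_le_pow_of_le_one hθ0.le hθ1.le hk
        nlinarith

lemma geom_bound {θ : ℝ} (hθ0 : 0 < θ) (hθ1 : θ < 1) (N : ℕ) :
    ∑ j ∈ Finset.range N, θ ^ j ≤ (1 - θ)⁻¹ := by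
  have hsum : Summable (fun j : ℕ => θ ^ j) := summable_geometric_of_lt_one hθ0.le hθ1
  calc ∑ j ∈ Finset.range N, θ ^ j ≤ ∑' j : ℕ, θ ^ j :=
        Summable.sum_le_tsum _ (fun i _ => by positivity) hsum
  _ = (1 - θ)⁻¹ := tsum_geometric_of_lt_one hθ0.le hθ1

/-- birkhoff-sum distortion -/
lemma birkhoff_dist {θ C : ℝ} (hθ0 : 0 < θ) (hθ1 : θ < 1) {f : X d → ℝ} (hf : LipWrt θ C f)
    (hC : 0 ≤ C) (x y : X d) (N k : ℕ) (hagree : ∀ j, j < N + k → x j = y j) :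
    |birkhoff f N x - birkhoff f N y| ≤ C * (1 - θ)⁻¹ * θ ^ k := by
  have key : ∀ i, i < N → |f (shift^[i] x) - f (shift^[i] y)| ≤ C * θ ^ k * θ ^ (N - 1 - i) := by
    intro i hi
    have := f_dist hθ0 hθ1 hf hC (shift^[i] x) (shift^[i] y) (N + k - i) (by
      intro j hj
      rw [shift_iter_apply, shift_iter_apply]
      exact hagree (j + i) (by omega))
    calc |f (shift^[i] x) - f (shift^[i] y)| ≤ C * θ ^ (N + k - i) := this
    _ = C * θ ^ k * θ ^ (N - i) := by rw [mul_assoc, ← pow_add]; congr 2; omega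
    _ ≤ C * θ ^ k * θ ^ (N - 1 - i) := by
        have : θ ^ (N - i) ≤ θ ^ (N - 1 - i) := pow_le_pow_of_le_one hθ0.le hθ1.le (by omega)
        have h0 : (0:ℝ) ≤ C * θ ^ k := by positivity
        nlinarith
  unfold birkhoff
  rw [← Finset.sum_sub_distrib]
  calc |∑ i ∈ Finset.range N, (f (shift^[i] x) - f (shift^[i] y))|
      ≤ ∑ i ∈ Finset.range N, |f (shift^[i] x) - f (shift^[i] y)| :=
        Finset.abs_sum_le_sum_abs _ _
  _ ≤ ∑ i ∈ Finset.range N, C * θ ^ k * θ ^ (N - 1 - i) :=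
        Finset.sum_le_sum fun i hi => key i (Finset.mem_range.mp hi)
  _ = C * θ ^ k * ∑ i ∈ Finset.range N, θ ^ (N - 1 - i) := by rw [Finset.mul_sum]
  _ ≤ C * θ ^ k * (1 - θ)⁻¹ := by
      have hsum : ∑ i ∈ Finset.range N, θ ^ (N - 1 - i) ≤ (1 - θ)⁻¹ := by
        rw [← Finset.sum_range_reflect]
        calc ∑ i ∈ Finset.range N, θ ^ (N - 1 - (N - 1 - i))
            ≤ ∑ i ∈ Finset.range N, θ ^ i := by
              refine Finset.sum_le_sum fun i hi => ?_
              have hi' := Finset.mem_range.mp hi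
              exact pow_le_pow_of_le_one hθ0.le hθ1.le (by omega)
        _ ≤ (1 - θ)⁻¹ := geom_bound hθ0 hθ1 N
      have h0 : (0:ℝ) ≤ C * θ ^ k := by positivity
      nlinarith
  _ = C * (1 - θ)⁻¹ * θ ^ k := by ring

/-- continuity of a Lipschitz function -/
lemma continuous_of_lip {θ C : ℝ} (hθ0 : 0 < θ) (hθ1 : θ < 1) {f : X d → ℝ}
    (hf : LipWrt θ C f) (hC : 0 ≤ C) : Continuous f := by
  rw [continuous_iff_continuousAt]
  intro x
  rw [ContinuousAt, Metric.tendsto_nhds]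
  intro ε hε
  obtain ⟨k, hk⟩ : ∃ k : ℕ, C * θ ^ k < ε := by
    rcases eq_or_lt_of_le hC with h | h
    · exact ⟨0, by rw [← h]; simpa using hε⟩
    · obtain ⟨k, hk⟩ := exists_pow_lt_of_lt_one (div_pos hε h) hθ1
      exact ⟨k, by rw [mul_comm, ← lt_div_iff₀ h]; exact hk⟩
  have hopen : IsOpen {y : X d | ∀ j ∈ Finset.range k, y j = x j} := by
    have : {y : X d | ∀ j ∈ Finset.range k, y j = x j}
        = ⋂ j ∈ Finset.range k, {y : X d | y j = x j} := by
      ext y; simp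
    rw [this]
    refine isOpen_biInter_finset fun j _ => ?_
    have : {y : X d | y j = x j} = (fun y : X d => y j) ⁻¹' {x j} := rfl
    rw [this]
    exact IsOpen.preimage (continuous_apply j) (isOpen_discrete ({x j} : Set (Fin d)))
  have hmem : {y : X d | ∀ j ∈ Finset.range k, y j = x j} ∈ nhds x :=
    hopen.mem_nhds (by simp)
  filter_upwards [hmem] with y hy
  have := f_dist hθ0 hθ1 hf hC y x k (fun j hj => hy j (Finset.mem_range.mpr hj))
  rw [Real.dist_eq]
  exact lt_of_le_of_lt this hk

end Stmt5Aux

namespace Stmt5Aux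
variable {d : ℕ}

/-- the set whose sSup is beta f -/
def betaSet (f : X d → ℝ) : Set ℝ :=
  {r : ℝ | ∃ μ : Measure (X d), IsProbabilityMeasure μ ∧ μ.map shift = μ ∧ r = ∫ x, f x ∂μ}

lemma beta_eq (f : X d → ℝ) : beta f = sSup (betaSet f) := rfl

lemma integrable_cont {f : X d → ℝ} (hfc : Continuous f) (μ : Measure (X d))
    [IsProbabilityMeasure μ] : Integrable f μ := by
  have h := hfc.continuousOn.integrableOn_compact (μ := μ) (isCompact_univ (X := X d))
  simpa [IntegrableOn] using h

lemma integral_le_of_le {f : X d → ℝ} (hfc : Continuous f) (μ : Measure (X d))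
    [IsProbabilityMeasure μ] (M : ℝ) (hM : ∀ y, f y ≤ M) : ∫ x, f x ∂μ ≤ M := by
  calc ∫ x, f x ∂μ ≤ ∫ _x, M ∂μ :=
        integral_mono (integrable_cont hfc μ) (integrable_const M) hM
  _ = M := by simp

lemma betaSet_bddAbove {f : X d → ℝ} (hfc : Continuous f) (M : ℝ) (hM : ∀ y, f y ≤ M) :
    BddAbove (betaSet f) := by
  refine ⟨M, fun r hr => ?_⟩
  obtain ⟨μ, hμp, hμi, rfl⟩ := hr
  exact integral_le_of_le hfc μ M hM

lemma fixedPt_mem (hd : 0 < d) (f : X d → ℝ) (hfc : Continuous f) :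
    f (fun _ => (⟨0, hd⟩ : Fin d)) ∈ betaSet f := by
  set xb : X d := fun _ => (⟨0, hd⟩ : Fin d) with hxb
  have hfix : shift xb = xb := rfl
  refine ⟨Measure.dirac xb, by infer_instance, ?_, ?_⟩
  · rw [Measure.map_dirac' measurable_shift, hfix]
  · rw [integral_dirac' f xb hfc.stronglyMeasurable]

lemma betaSet_nonempty (hd : 0 < d) (f : X d → ℝ) (hfc : Continuous f) :
    (betaSet f).Nonempty := ⟨_, fixedPt_mem hd f hfc⟩

lemma beta_lb (hd : 0 < d) {f : X d → ℝ} (hfc : Continuous f) (M : ℝ) (hM : ∀ y, f y ≤ M) :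
    f (fun _ => (⟨0, hd⟩ : Fin d)) ≤ beta f :=
  le_csSup (betaSet_bddAbove hfc M hM) (fixedPt_mem hd f hfc)

lemma beta_ub {f : X d → ℝ} (hd : 0 < d) (hfc : Continuous f) (M : ℝ) (hM : ∀ y, f y ≤ M) :
    beta f ≤ M :=
  csSup_le (betaSet_nonempty hd f hfc) fun r hr => by
    obtain ⟨μ, hμp, hμi, rfl⟩ := hr
    exact integral_le_of_le hfc μ M hM

/-- integral invariance under iterates -/
lemma integral_comp_iterate {f : X d → ℝ} (hfc : Continuous f) (μ : Measure (X d))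
    [IsProbabilityMeasure μ] (hinv : μ.map shift = μ) (i : ℕ) :
    ∫ x, f (shift^[i] x) ∂μ = ∫ x, f x ∂μ := by
  induction i with
  | zero => simp
  | succ i ih =>
    have h1 : ∫ x, f (shift^[i] x) ∂(μ.map shift) = ∫ x, f (shift^[i] (shift x)) ∂μ := by
      refine integral_map measurable_shift.aemeasurable ?_
      exact ((hfc.comp (continuous_shift.iterate i)).stronglyMeasurable).aestronglyMeasurable
    rw [hinv] at h1
    have h2 : ∫ x, f (shift^[i+1] x) ∂μ = ∫ x, f (shift^[i] (shift x)) ∂μ := by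
      simp only [Function.iterate_succ_apply]
    rw [h2, ← h1, ih]

lemma integral_birkhoff {f : X d → ℝ} (hfc : Continuous f) (μ : Measure (X d))
    [IsProbabilityMeasure μ] (hinv : μ.map shift = μ) (N : ℕ) :
    ∫ x, birkhoff f N x ∂μ = N * ∫ x, f x ∂μ := by
  unfold birkhoff
  rw [integral_finset_sum]
  · rw [Finset.sum_congr rfl fun i _ => integral_comp_iterate hfc μ hinv i]
    simp [mul_comm]
  · intro i _
    exact integrable_cont (hfc.comp (continuous_shift.iterate i)) μ

/-- the uniform measure on a periodic orbit belongs to betaSet -/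
lemma periodic_avg_mem {f : X d → ℝ} (hfc : Continuous f) (x : X d) (N : ℕ) (hN : 0 < N)
    (hper : shift^[N] x = x) :
    birkhoff f N x / N ∈ betaSet f := by
  set ρ : Measure (X d) := ((N : ℝ≥0∞))⁻¹ • ∑ i ∈ Finset.range N, Measure.dirac (shift^[i] x)
    with hρ
  have hNne : (N : ℝ≥0∞) ≠ 0 := by simp [hN.ne']
  have hNnt : (N : ℝ≥0∞) ≠ ⊤ := by simp
  have happly : ∀ s : Set (X d), MeasurableSet s →
      ρ s = ((N : ℝ≥0∞))⁻¹ * ∑ i ∈ Finset.range N, s.indicator (fun _ => (1:ℝ≥0∞)) (shift^[i] x) := by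
    intro s hs
    rw [hρ, Measure.smul_apply, Measure.finset_sum_apply]
    simp only [smul_eq_mul]
    congr 1
    exact Finset.sum_congr rfl fun i _ => Measure.dirac_apply' _ hs
  have hprob : IsProbabilityMeasure ρ := by
    constructor
    rw [happly Set.univ MeasurableSet.univ]
    simp [ENNReal.inv_mul_cancel hNne hNnt]
  have hinv : ρ.map shift = ρ := by
    refine Measure.ext fun s hs => ?_
    rw [Measure.map_apply measurable_shift hs, happly _ (measurable_shift hs), happly s hs]
    congr 1
    have hres : ∀ i, (shift ⁻¹' s).indicator (fun _ => (1:ℝ≥0∞)) (shift^[i] x)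
        = s.indicator (fun _ => (1:ℝ≥0∞)) (shift^[i+1] x) := by
      intro i
      rw [Function.iterate_succ_apply']
      rfl
    rw [Finset.sum_congr rfl fun i _ => hres i]
    -- rotate the sum using periodicity
    have h0 : ∀ g : ℕ → ℝ≥0∞, g N = g 0 → g 0 ≠ ⊤ →
        ∑ i ∈ Finset.range N, g (i+1) = ∑ i ∈ Finset.range N, g i := by
      intro g hg hfin
      have h1 : ∑ i ∈ Finset.range (N+1), g i = (∑ i ∈ Finset.range N, g (i+1)) + g 0 :=
        Finset.sum_range_succ' g N
      have h2 : ∑ i ∈ Finset.range (N+1), g i = (∑ i ∈ Finset.range N, g i) + g N :=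
        Finset.sum_range_succ g N
      rw [h1, hg] at h2
      exact (WithTop.add_right_cancel hfin h2.symm).symm
    refine h0 (fun i => s.indicator (fun _ => (1:ℝ≥0∞)) (shift^[i] x)) ?_ ?_
    · simp only [Function.iterate_zero_apply]
      rw [hper]
    · by_cases hx : x ∈ s <;> simp [Set.indicator, hx]
  refine ⟨ρ, hprob, hinv, ?_⟩
  rw [hρ, integral_smul_measure, integral_finset_sum_measure]
  · rw [Finset.sum_congr rfl fun i _ => integral_dirac' f _ hfc.stronglyMeasurable]
    rw [ENNReal.toReal_inv]
    simp only [ENNReal.toReal_natCast, smul_eq_mul]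
    rw [div_eq_inv_mul]
    rfl
  · intro i _
    exact integrable_cont hfc _

end Stmt5Aux

namespace Stmt5Aux
variable {d : ℕ}

section WithF
variable {θ C : ℝ} {f : X d → ℝ} (hd : 0 < d) (hθ0 : 0 < θ) (hθ1 : θ < 1)
  (hf : LipWrt θ C f) (hC : 0 ≤ C) (hfc : Continuous f) (M : ℝ) (hM : ∀ y, f y ≤ M)
set_option linter.unusedSectionVars false
include hd hθ0 hθ1 hf hC hfc hM

/-- periodic orbit averages are at most beta -/
lemma periodic_birkhoff_le (n : ℕ) (w : Fin (n+1) → Fin d) :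
    birkhoff f (n+1) (periodize n w) ≤ ((n : ℝ)+1) * beta f := by
  have hmem := periodic_avg_mem hfc (periodize n w) (n+1) (Nat.succ_pos n)
    (shift_iter_periodize n w)
  have hle : birkhoff f (n+1) (periodize n w) / ((n:ℝ)+1) ≤ beta f :=
    le_csSup (betaSet_bddAbove hfc M hM) (by exact_mod_cast hmem)
  have hpos : (0:ℝ) < (n:ℝ)+1 := by positivity
  calc birkhoff f (n+1) (periodize n w)
      = (birkhoff f (n+1) (periodize n w) / ((n:ℝ)+1)) * ((n:ℝ)+1) := by field_simp
  _ ≤ beta f * ((n:ℝ)+1) := by nlinarith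
  _ = ((n:ℝ)+1) * beta f := by ring

/-- truncation: every Birkhoff sum is nearly dominated by the best word -/
lemma birkhoff_le_word (x : X d) (n : ℕ) :
    ∃ w : Fin (n+1) → Fin d,
      birkhoff f (n+1) x ≤ birkhoff f (n+1) (periodize n w) + C * (1-θ)⁻¹ := by
  refine ⟨fun i => x i, ?_⟩
  have hagree : ∀ j, j < (n+1) + 0 → x j = periodize n (fun i : Fin (n+1) => x i) j := by
    intro j hj
    rw [periodize_apply_lt n _ j (by omega)]
  have := birkhoff_dist hθ0 hθ1 hf hC x (periodize n (fun i : Fin (n+1) => x i)) (n+1) 0 hagree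
  rw [pow_zero, mul_one] at this
  have := abs_le.mp this
  linarith [this.1]

/-- there is a word whose Birkhoff sum nearly reaches `(n+1) * beta f` -/
lemma exists_good_word (n : ℕ) :
    ∃ w : Fin (n+1) → Fin d,
      ((n : ℝ)+1) * beta f ≤ birkhoff f (n+1) (periodize n w) + C * (1-θ)⁻¹ := by
  have hne : Nonempty (Fin d) := ⟨⟨0, hd⟩⟩
  obtain ⟨wm, _, hwm⟩ := Finset.exists_max_image (Finset.univ : Finset (Fin (n+1) → Fin d))
    (fun w => birkhoff f (n+1) (periodize n w)) ⟨fun _ => ⟨0, hd⟩, Finset.mem_univ _⟩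
  refine ⟨wm, ?_⟩
  have hpt : ∀ x : X d, birkhoff f (n+1) x ≤ birkhoff f (n+1) (periodize n wm) + C * (1-θ)⁻¹ := by
    intro x
    obtain ⟨w, hw⟩ := birkhoff_le_word hd hθ0 hθ1 hf hC hfc M hM x n
    exact le_trans hw (by have := hwm w (Finset.mem_univ w); linarith)
  have hub : ∀ r ∈ betaSet f,
      ((n : ℝ)+1) * r ≤ birkhoff f (n+1) (periodize n wm) + C * (1-θ)⁻¹ := by
    rintro r ⟨μ, hμp, hμi, rfl⟩
    rw [show ((n:ℝ)+1) * ∫ x, f x ∂μ = ((n+1 : ℕ) : ℝ) * ∫ x, f x ∂μ by push_cast; ring,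
      ← integral_birkhoff hfc μ hμi (n+1)]
    exact integral_le_of_le (continuous_birkhoff hfc (n+1)) μ _ hpt
  have hβ : beta f ≤ (birkhoff f (n+1) (periodize n wm) + C * (1-θ)⁻¹) / ((n:ℝ)+1) := by
    refine csSup_le (betaSet_nonempty hd f hfc) fun r hr => ?_
    have := hub r hr
    have hpos : (0:ℝ) < (n:ℝ)+1 := by positivity
    rw [le_div_iff₀ hpos]
    linarith
  have hpos : (0:ℝ) < (n:ℝ)+1 := by positivity
  calc ((n : ℝ)+1) * beta f
      ≤ ((n:ℝ)+1) * ((birkhoff f (n+1) (periodize n wm) + C * (1-θ)⁻¹) / ((n:ℝ)+1)) := by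
        nlinarith
  _ = birkhoff f (n+1) (periodize n wm) + C * (1-θ)⁻¹ := by field_simp

end WithF
end Stmt5Aux

namespace Stmt5Aux
variable {d : ℕ}

set_option linter.unusedSectionVars false
set_option maxHeartbeats 1000000

section WithF
variable {θ C : ℝ} {f : X d → ℝ} (hd : 0 < d) (hθ0 : 0 < θ) (hθ1 : θ < 1)
  (hf : LipWrt θ C f) (hC : 0 ≤ C) (hfc : Continuous f) (M : ℝ) (hM : ∀ y, f y ≤ M)
include hd hθ0 hθ1 hf hC hfc hM

lemma birkhoff_sub_const (g : X d → ℝ) (b : ℝ) (m : ℕ) (x : X d) :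
    birkhoff (fun y => g y - b) m x = birkhoff g m x - m * b := by
  simp [birkhoff, Finset.sum_sub_distrib, mul_comm]

/-- THE KEY LEMMA: there are periodic words with arbitrarily small total defect -/
lemma exists_small_defect (ε : ℝ) (hε : 0 < ε) :
    ∃ n : ℕ, ∃ w : Fin (n+1) → Fin d,
      ((n:ℝ)+1) * beta f - birkhoff f (n+1) (periodize n w) ≤ ε := by
  by_contra hcon
  push_neg at hcon
  set β := beta f with hβdef
  have hβM : β ≤ M := beta_ub hd hfc M hM
  set K := C * (1-θ)⁻¹ with hK
  have hKnn : 0 ≤ K := by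
    rw [hK]
    have : (0:ℝ) < 1 - θ := by linarith
    positivity
  -- choose k with K * θ^k ≤ ε/2
  obtain ⟨k, hk⟩ : ∃ k : ℕ, K * θ ^ k ≤ ε/2 := by
    rcases eq_or_lt_of_le hKnn with h | h
    · refine ⟨0, ?_⟩
      rw [← h, zero_mul]
      positivity
    · obtain ⟨k, hk⟩ := exists_pow_lt_of_lt_one (div_pos (by linarith : (0:ℝ) < ε/2) h) hθ1
      exact ⟨k, by rw [mul_comm, ← le_div_iff₀ h]; exact hk.le⟩
  -- step 1 : every exact return segment has defect at least ε/2
  have hstep1 : ∀ (y : X d) (p : ℕ), 1 ≤ p → (∀ i, i < k → y (p + i) = y i) →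
      birkhoff f p y ≤ p * β - ε/2 := by
    intro y p hp hret
    obtain ⟨m, rfl⟩ : ∃ m, p = m + 1 := ⟨p - 1, by omega⟩
    set w : Fin (m+1) → Fin d := fun i => y i with hw
    -- y is (m+1)-periodic on the window of length (m+1)+k
    have hmod : ∀ j, j < (m+1) + k → y j = y (j % (m+1)) := by
      intro j
      induction j using Nat.strong_induction_on with
      | _ j ih =>
        intro hj
        by_cases hjm : j < m + 1
        · rw [Nat.mod_eq_of_lt hjm]
        · have h1 : y j = y (j - (m+1)) := by
            conv_lhs => rw [show j = (m+1) + (j - (m+1)) by omega]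
            exact hret (j - (m+1)) (by omega)
          have hsub : y (j - (m+1)) = y ((j - (m+1)) % (m+1)) :=
            ih (j - (m+1)) (by omega) (by omega)
          have hmodeq : j % (m+1) = (j - (m+1)) % (m+1) := Nat.mod_eq_sub_mod (by omega)
          rw [h1, hsub, hmodeq]
    have hagree : ∀ j, j < (m+1) + k → y j = periodize m w j := by
      intro j hj
      rw [periodize_apply]
      exact hmod j hj
    have hdist := birkhoff_dist hθ0 hθ1 hf hC y (periodize m w) (m+1) k hagree
    have habs := (abs_le.mp hdist).2
    have hword := hcon m w
    push_cast
    push_cast at hword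
    rw [← hK] at habs
    linarith [hk]
  -- step 2 : along every orbit the Birkhoff sums drop below m*β - 1
  have hstep2 : ∀ x : X d, ∃ m : ℕ, 1 ≤ m ∧ birkhoff f m x < m * β - 1 := by
    intro x
    obtain ⟨w, hwinf⟩ := Finite.exists_infinite_fiber (fun t : ℕ => (fun i : Fin k => x (t + i)))
    have hinf : {t : ℕ | (fun i : Fin k => x (t + i)) = w}.Infinite := by
      rw [← Set.infinite_coe_iff]
      exact hwinf
    set p : ℕ → Prop := fun t => (fun i : Fin k => x (t + i)) = w with hp
    have hpinf : (setOf p).Infinite := hinf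
    set u : ℕ → ℕ := fun r => Nat.nth p r with hu
    have humono : StrictMono u := Nat.nth_strictMono hpinf
    have hup : ∀ r, p (u r) := fun r => Nat.nth_mem_of_infinite hpinf r
    -- each consecutive return segment
    have hseg : ∀ r : ℕ,
        birkhoff f (u (r+1) - u r) (shift^[u r] x) ≤ ((u (r+1) - u r : ℕ)) * β - ε/2 := by
      intro r
      have hlt : u r < u (r+1) := humono (Nat.lt_succ_self r)
      refine hstep1 (shift^[u r] x) (u (r+1) - u r) (by omega) ?_
      intro i hi
      rw [shift_iter_apply, shift_iter_apply]
      have h1 : u (r+1) - u r + i + u r = u (r+1) + i := by omega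
      have h2 : (fun j : Fin k => x (u (r+1) + j)) = w := hup (r+1)
      have h3 : (fun j : Fin k => x (u r + j)) = w := hup r
      rw [h1]
      calc x (u (r+1) + i) = (fun j : Fin k => x (u (r+1) + j)) ⟨i, hi⟩ := rfl
      _ = w ⟨i, hi⟩ := by rw [h2]
      _ = (fun j : Fin k => x (u r + j)) ⟨i, hi⟩ := by rw [h3]
      _ = x (i + u r) := by simp [Nat.add_comm]
    -- telescoping
    have htel : ∀ R : ℕ,
        birkhoff f (u R - u 0) (shift^[u 0] x) ≤ ((u R - u 0 : ℕ)) * β - R * (ε/2) := by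
      intro R
      induction R with
      | zero => simp [birkhoff]
      | succ R ih =>
        have hle1 : u 0 ≤ u R := humono.monotone (Nat.zero_le R)
        have hle2 : u R ≤ u (R+1) := humono.monotone (Nat.le_succ R)
        have hsplit : u (R+1) - u 0 = (u R - u 0) + (u (R+1) - u R) := by omega
        rw [hsplit, birkhoff_add_apply]
        have hit : shift^[u R - u 0] (shift^[u 0] x) = shift^[u R] x := by
          rw [← Function.iterate_add_apply]
          congr 1
          omega
        rw [hit]
        have := hseg R
        push_cast
        push_cast at ih this
        have hc1 : ((u (R+1) : ℝ) - u R) = ((u (R+1) - u R : ℕ) : ℝ) := by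
          push_cast [Nat.cast_sub hle2]; ring
        have hc2 : ((u R : ℝ) - u 0) = ((u R - u 0 : ℕ) : ℝ) := by
          push_cast [Nat.cast_sub hle1]; ring
        push_cast at hc1 hc2
        nlinarith [this, ih]
    -- choose R large enough
    have hβnn : (0:ℝ) ≤ M - β := by linarith
    obtain ⟨R0, hR0⟩ := exists_nat_ge (((u 0 : ℝ) * (M - β) + 2) / (ε/2))
    set R : ℕ := max R0 1 with hRdef
    have hR2 : (u 0 : ℝ) * (M - β) + 2 ≤ (R : ℝ) * (ε/2) := by
      have h1 : ((u 0 : ℝ) * (M - β) + 2) / (ε/2) ≤ (R : ℝ) := by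
        refine le_trans hR0 ?_
        exact_mod_cast Nat.le_max_left R0 1
      rw [div_le_iff₀ (by linarith : (0:ℝ) < ε/2)] at h1
      linarith
    have hR1 : 1 ≤ R := Nat.le_max_right R0 1
    have hu0R : u 0 < u R := humono (by omega)
    refine ⟨u R, by omega, ?_⟩
    have hsplit : u R = u 0 + (u R - u 0) := by omega
    rw [hsplit, birkhoff_add_apply]
    have h1 : birkhoff f (u 0) x ≤ (u 0 : ℝ) * M := birkhoff_le f M hM (u 0) x
    have h2 := htel R
    have hle : u 0 ≤ u R := hu0R.le
    have hc : ((u R - u 0 : ℕ) : ℝ) = (u R : ℝ) - (u 0 : ℝ) := by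
      push_cast [Nat.cast_sub hle]; ring
    rw [hc] at h2
    push_cast [Nat.cast_sub hle]
    have hβfx : (u 0 : ℝ) * β ≤ (u 0 : ℝ) * M := by nlinarith [Nat.cast_nonneg (α := ℝ) (u 0)]
    linarith [h1, h2, hc, hR2]
  -- step 3 : compactness gives a uniform bound on the stopping time
  have hstep3 : ∃ n₀ : ℕ, 1 ≤ n₀ ∧ ∀ x : X d, ∃ m : ℕ, 1 ≤ m ∧ m ≤ n₀ ∧
      birkhoff f m x < m * β - 1 := by
    set U : ℕ → Set (X d) := fun n => {x | ∃ m, 1 ≤ m ∧ m ≤ n ∧ birkhoff f m x < m * β - 1}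
      with hU
    have hopen : ∀ n, IsOpen (U n) := by
      intro n
      have : U n = ⋃ m ∈ Finset.Icc 1 n, {x : X d | birkhoff f m x < m * β - 1} := by
        ext x
        simp only [hU, Set.mem_setOf_eq, Set.mem_iUnion, Finset.mem_Icc]
        constructor
        · rintro ⟨m, h1, h2, h3⟩; exact ⟨m, ⟨h1, h2⟩, h3⟩
        · rintro ⟨m, ⟨h1, h2⟩, h3⟩; exact ⟨m, h1, h2, h3⟩
      rw [this]
      refine isOpen_biUnion fun m _ => ?_
      exact isOpen_lt (continuous_birkhoff hfc m) continuous_const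
    have hcover : (Set.univ : Set (X d)) ⊆ ⋃ n, U n := by
      intro x _
      obtain ⟨m, hm1, hm2⟩ := hstep2 x
      exact Set.mem_iUnion.mpr ⟨m, ⟨m, hm1, le_refl m, hm2⟩⟩
    obtain ⟨t, ht⟩ := isCompact_univ.elim_finite_subcover U hopen hcover
    refine ⟨(t.sup id) + 1, by omega, fun x => ?_⟩
    obtain ⟨n, hn, hxn⟩ := Set.mem_iUnion₂.mp (ht (Set.mem_univ x))
    obtain ⟨m, hm1, hm2, hm3⟩ := hxn
    exact ⟨m, hm1, by have := Finset.le_sup (f := id) hn; simp at this; omega, hm3⟩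
  obtain ⟨n₀, hn₀1, hn₀⟩ := hstep3
  -- step 4 : uniform linear decay of Birkhoff sums
  have hstep4 : ∀ T : ℕ, ∀ x : X d,
      birkhoff f T x ≤ T * β + (n₀ * (M - β) + 1) - T / n₀ := by
    intro T
    induction T using Nat.strong_induction_on with
    | _ T ih =>
      intro x
      have hn₀R : (0:ℝ) < (n₀ : ℝ) := by exact_mod_cast hn₀1
      by_cases hT : T ≤ n₀
      · have h1 : birkhoff f T x ≤ (T:ℝ) * M := birkhoff_le f M hM T x
        have h2 : (T:ℝ) / n₀ ≤ 1 := by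
          rw [div_le_one hn₀R]; exact_mod_cast hT
        have h3 : (T:ℝ) * (M - β) ≤ (n₀:ℝ) * (M - β) := by
          have : (T:ℝ) ≤ (n₀:ℝ) := by exact_mod_cast hT
          nlinarith
        nlinarith [h1, h2, h3]
      · obtain ⟨m, hm1, hm2, hm3⟩ := hn₀ x
        have hmT : m < T := by omega
        have hsplit : T = m + (T - m) := by omega
        rw [hsplit, birkhoff_add_apply]
        have ih2 := ih (T - m) (by omega) (shift^[m] x)
        have hc : ((T - m : ℕ) : ℝ) = (T : ℝ) - (m : ℝ) := by
          push_cast [Nat.cast_sub hmT.le]; ring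
        rw [hc] at ih2
        have hdivle : ((T:ℝ) - m) / n₀ ≥ (T:ℝ)/n₀ - 1 := by
          rw [sub_div]
          have : (m:ℝ)/n₀ ≤ 1 := by
            rw [div_le_one hn₀R]
            exact_mod_cast hm2
          linarith
        push_cast [Nat.cast_sub hmT.le]
        push_cast at hm3 ih2
        rw [show (↑m + ((T:ℝ) - ↑m)) = (T:ℝ) by ring]
        linarith [hm3, ih2, hdivle]
  -- step 5 : every invariant average is at most β - 1/(2 n₀)
  have hstep5 : ∀ r ∈ betaSet f, r ≤ β - 1/(2*n₀) := by
    rintro r ⟨μ, hμp, hμi, rfl⟩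
    have hn₀R : (0:ℝ) < (n₀ : ℝ) := by exact_mod_cast hn₀1
    set A : ℝ := (n₀ * (M - β) + 1) with hA
    have hβnn : (0:ℝ) ≤ M - β := by linarith
    have hA1 : 1 ≤ A := by
      have : (0:ℝ) ≤ (n₀:ℝ) * (M - β) := mul_nonneg hn₀R.le hβnn
      rw [hA]
      linarith
    obtain ⟨T, hT⟩ := exists_nat_ge (2 * n₀ * A)
    have hTpos : (0:ℝ) < T := by nlinarith
    have hTnat : 0 < T := by exact_mod_cast hTpos
    have h1 : (T:ℝ) * (∫ x, f x ∂μ) = ∫ x, birkhoff f T x ∂μ := by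
      rw [integral_birkhoff hfc μ hμi T]
    have h2 : ∫ x, birkhoff f T x ∂μ ≤ (T:ℝ) * β + A - T / n₀ :=
      integral_le_of_le (continuous_birkhoff hfc T) μ _ (fun y => hstep4 T y)
    have h3 : (T:ℝ) * (∫ x, f x ∂μ) ≤ (T:ℝ) * β + A - T/n₀ := by rw [h1]; exact h2
    -- divide by T
    have h4 : ∫ x, f x ∂μ ≤ β + A/T - 1/n₀ := by
      rw [← mul_le_mul_iff_right₀ hTpos]
      calc (T:ℝ) * ∫ x, f x ∂μ ≤ (T:ℝ) * β + A - T/n₀ := h3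
      _ = (T:ℝ) * (β + A/T - 1/n₀) := by field_simp
    have h5 : A / (T:ℝ) ≤ 1/(2*n₀) := by
      rw [div_le_div_iff₀ hTpos (by positivity)]
      nlinarith
    have h6 : (1:ℝ)/(2*(n₀:ℝ)) * 2 = 1/(n₀:ℝ) := by field_simp
    linarith
  -- step 6 : contradiction with the definition of β
  have hfinal : β ≤ β - 1/(2*n₀) :=
    csSup_le (betaSet_nonempty hd f hfc) hstep5
  have hn₀R : (0:ℝ) < (n₀ : ℝ) := by exact_mod_cast hn₀1
  have : (0:ℝ) < 1/(2*n₀) := by positivity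
  linarith

end WithF
end Stmt5Aux

namespace Stmt5Aux
variable {d : ℕ}

set_option linter.unusedSectionVars false
set_option maxHeartbeats 1000000

lemma card_words (n : ℕ) : Fintype.card (Fin (n+1) → Fin d) = d ^ (n+1) := by
  simp [Fintype.card_fun]

section WithF
variable {θ C : ℝ} {f : X d → ℝ} (hd : 0 < d) (hθ0 : 0 < θ) (hθ1 : θ < 1)
  (hf : LipWrt θ C f) (hC : 0 ≤ C) (hfc : Continuous f) (M : ℝ) (hM : ∀ y, f y ≤ M)
include hd hθ0 hθ1 hf hC hfc hM

lemma Zsum_le (c : ℝ) (hc : 0 < c) (n : ℕ) :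
    ∑ w : Fin (n+1) → Fin d, Real.exp (c * birkhoff f (n+1) (periodize n w))
      ≤ (d:ℝ) ^ (n+1) * Real.exp (c * (((n:ℝ)+1) * beta f)) := by
  calc ∑ w : Fin (n+1) → Fin d, Real.exp (c * birkhoff f (n+1) (periodize n w))
      ≤ ∑ _w : Fin (n+1) → Fin d, Real.exp (c * (((n:ℝ)+1) * beta f)) := by
        refine Finset.sum_le_sum fun w _ => ?_
        have h1 := periodic_birkhoff_le hd hθ0 hθ1 hf hC hfc M hM n w
        exact Real.exp_le_exp.mpr (by nlinarith)
  _ = (d:ℝ) ^ (n+1) * Real.exp (c * (((n:ℝ)+1) * beta f)) := by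
      rw [Finset.sum_const, Finset.card_univ, card_words, nsmul_eq_mul]
      push_cast
      ring

lemma Zsum_ge (c : ℝ) (hc : 0 < c) (n : ℕ) :
    Real.exp (c * (((n:ℝ)+1) * beta f - C * (1-θ)⁻¹))
      ≤ ∑ w : Fin (n+1) → Fin d, Real.exp (c * birkhoff f (n+1) (periodize n w)) := by
  obtain ⟨w, hw⟩ := exists_good_word hd hθ0 hθ1 hf hC hfc M hM n
  calc Real.exp (c * (((n:ℝ)+1) * beta f - C * (1-θ)⁻¹))
      ≤ Real.exp (c * birkhoff f (n+1) (periodize n w)) :=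
        Real.exp_le_exp.mpr (by nlinarith)
  _ ≤ ∑ w : Fin (n+1) → Fin d, Real.exp (c * birkhoff f (n+1) (periodize n w)) :=
      Finset.single_le_sum (f := fun w' : Fin (n+1) → Fin d =>
        Real.exp (c * birkhoff f (n+1) (periodize n w')))
        (fun w' _ => (Real.exp_pos _).le) (Finset.mem_univ w)

lemma pressure_bounds (c : ℝ) (hc : 0 < c) :
    c * beta f ≤ pressure (fun y => c * f y) ∧
      pressure (fun y => c * f y) ≤ c * beta f + Real.log d := by
  set β := beta f with hβ
  set K := C * (1-θ)⁻¹ with hK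
  have hKnn : 0 ≤ K := by
    rw [hK]
    have : (0:ℝ) < 1 - θ := by linarith
    positivity
  set a : ℕ → ℝ := fun n =>
    Real.log (∑ w : Fin (n+1) → Fin d,
      Real.exp (birkhoff (fun y => c * f y) (n+1) (periodize n w))) / ((n:ℝ)+1) with ha
  have hpres : pressure (fun y => c * f y) = limsup a atTop := rfl
  have hrw : ∀ n (w : Fin (n+1) → Fin d),
      birkhoff (fun y => c * f y) (n+1) (periodize n w) = c * birkhoff f (n+1) (periodize n w) :=
    fun n w => birkhoff_mul c f (n+1) (periodize n w)
  have hd1 : (1:ℝ) ≤ (d:ℝ) := by exact_mod_cast hd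
  have hub : ∀ n, a n ≤ c * β + Real.log d := by
    intro n
    rw [ha]
    simp only []
    rw [Finset.sum_congr rfl fun w _ => congrArg Real.exp (hrw n w)]
    have hpos : (0:ℝ) < ∑ w : Fin (n+1) → Fin d, Real.exp (c * birkhoff f (n+1) (periodize n w)) := by
      refine Finset.sum_pos (fun w _ => Real.exp_pos _) ?_
      exact ⟨fun _ => ⟨0, hd⟩, Finset.mem_univ _⟩
    have hle := Zsum_le hd hθ0 hθ1 hf hC hfc M hM c hc n
    have hlog : Real.log (∑ w : Fin (n+1) → Fin d, Real.exp (c * birkhoff f (n+1) (periodize n w)))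
        ≤ ((n:ℝ)+1) * Real.log d + c * (((n:ℝ)+1) * β) := by
      calc Real.log (∑ w : Fin (n+1) → Fin d, Real.exp (c * birkhoff f (n+1) (periodize n w)))
          ≤ Real.log ((d:ℝ) ^ (n+1) * Real.exp (c * (((n:ℝ)+1) * β))) :=
            Real.log_le_log hpos hle
      _ = ((n:ℝ)+1) * Real.log d + c * (((n:ℝ)+1) * β) := by
          rw [Real.log_mul (by positivity) (Real.exp_ne_zero _), Real.log_pow, Real.log_exp]
          push_cast
          ring
    have hn1 : (0:ℝ) < (n:ℝ)+1 := by positivity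
    rw [div_le_iff₀ hn1]
    calc Real.log (∑ w : Fin (n+1) → Fin d, Real.exp (c * birkhoff f (n+1) (periodize n w)))
        ≤ ((n:ℝ)+1) * Real.log d + c * (((n:ℝ)+1) * β) := hlog
    _ = (c * β + Real.log d) * ((n:ℝ)+1) := by ring
  have hlb : ∀ n : ℕ, c * β - c * K / ((n:ℝ)+1) ≤ a n := by
    intro n
    rw [ha]
    simp only []
    rw [Finset.sum_congr rfl fun w _ => congrArg Real.exp (hrw n w)]
    have hge := Zsum_ge hd hθ0 hθ1 hf hC hfc M hM c hc n
    have hlog : c * (((n:ℝ)+1) * β - K)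
        ≤ Real.log (∑ w : Fin (n+1) → Fin d, Real.exp (c * birkhoff f (n+1) (periodize n w))) := by
      calc c * (((n:ℝ)+1) * β - K) = Real.log (Real.exp (c * (((n:ℝ)+1) * β - K))) :=
            (Real.log_exp _).symm
      _ ≤ _ := Real.log_le_log (Real.exp_pos _) hge
    have hn1 : (0:ℝ) < (n:ℝ)+1 := by positivity
    rw [le_div_iff₀ hn1]
    have hcc : c * K / ((n:ℝ)+1) * ((n:ℝ)+1) = c * K := div_mul_cancel₀ _ hn1.ne'
    linarith [hlog, hcc]
  have hbddAbove : IsBoundedUnder (· ≤ ·) atTop a :=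
    isBoundedUnder_of ⟨c * β + Real.log d, fun n => hub n⟩
  have hbddBelow : IsBoundedUnder (· ≥ ·) atTop a :=
    isBoundedUnder_of ⟨c * β - c * K, fun n => le_trans (by
      have hn1 : (0:ℝ) < (n:ℝ)+1 := by positivity
      have h1 : c * K / ((n:ℝ)+1) ≤ c * K := by
        rw [div_le_iff₀ hn1]
        nlinarith [mul_nonneg hc.le hKnn]
      linarith) (hlb n)⟩
  constructor
  · -- lower bound for the limsup
    rw [hpres]
    refine le_of_forall_pos_le_add fun δ hδ => ?_
    have hfreq : ∃ᶠ n in atTop, c * β - δ ≤ a n := by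
      have hev : ∀ᶠ n : ℕ in atTop, c * β - δ ≤ a n := by
        have hev2 : ∀ᶠ n : ℕ in atTop, c * K / ((n:ℝ)+1) ≤ δ := by
          obtain ⟨N, hN⟩ := exists_nat_ge (c * K / δ)
          filter_upwards [eventually_ge_atTop N] with n hn
          rw [div_le_iff₀ (by positivity : (0:ℝ) < (n:ℝ)+1)]
          have : (c * K / δ) ≤ (n:ℝ) := le_trans hN (by exact_mod_cast hn)
          rw [div_le_iff₀ hδ] at this
          nlinarith
        filter_upwards [hev2] with n hn
        linarith [hlb n]
      exact hev.frequently
    have := le_limsup_of_frequently_le hfreq hbddAbove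
    linarith
  · rw [hpres]
    exact limsup_le_of_le hbddBelow.isCobounded_flip (Eventually.of_forall hub)

end WithF
end Stmt5Aux

namespace Stmt5Aux
variable {d : ℕ}

set_option linter.unusedSectionVars false
set_option maxHeartbeats 1000000

lemma dtheta_nonneg (θ : ℝ) (hθ0 : 0 < θ) (x y : X d) : 0 ≤ dtheta θ x y := by
  simp only [dtheta]
  split
  · exact le_rfl
  · positivity

lemma birkhoff_nonneg {f : X d → ℝ} (hfpos : ∀ y, 0 < f y) (n : ℕ) (x : X d) :
    0 ≤ birkhoff f n x :=
  Finset.sum_nonneg fun i _ => (hfpos _).le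

end Stmt5Aux

open Stmt5Aux

set_option maxHeartbeats 4000000

theorem stmt5' (d : ℕ) (hd : 0 < d) (θ C : ℝ) (hθ0 : 0 < θ) (hθ1 : θ < 1)
    (f : X d → ℝ) (hf : LipWrt θ C f) (hfpos : ∀ x, 0 < f x)
    (μ : ℝ → ℝ → Measure (X d))
    (hprob : ∀ c s : ℝ, 0 < c → 0 < s → s < 1 → IsProbabilityMeasure (μ c s))
    (hdef : ∀ c s : ℝ, 0 < c → 0 < s → s < 1 → ∀ k : X d → ℝ, Continuous k →
      ∫ x, k x ∂(μ c s) = zetaVal f c s k / zetaVal f c s (fun _ => 1))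
    (ν : Measure (X d)) (hν : IsProbabilityMeasure ν)
    (cj sj : ℕ → ℝ) (hcj : Tendsto cj atTop atTop) (hsj : Tendsto sj atTop (𝓝 1))
    (hcpos : ∀ j, 0 < cj j) (hsrange : ∀ j, 0 < sj j ∧ sj j < 1)
    (hacc : ∀ g : X d → ℝ, Continuous g →
      Tendsto (fun j => ∫ x, g x ∂(μ (cj j) (sj j))) atTop (𝓝 (∫ x, g x ∂ν))) :
    ∫ x, f x ∂ν = beta f := by
  classical
  -- replace C by a nonnegative constant
  set C' : ℝ := max C 0 with hC'def
  have hC' : 0 ≤ C' := le_max_right C 0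
  have hf' : LipWrt θ C' f := by
    intro x y
    refine le_trans (hf x y) ?_
    have h0 := dtheta_nonneg θ hθ0 x y
    nlinarith [le_max_left C 0]
  have hfc : Continuous f := continuous_of_lip hθ0 hθ1 hf' hC'
  -- max of f
  have hXne : Nonempty (X d) := ⟨fun _ => ⟨0, hd⟩⟩
  obtain ⟨z, hz⟩ := hfc.exists_forall_ge (by
    have : Filter.cocompact (X d) = ⊥ := Filter.cocompact_eq_bot
    rw [this]
    exact tendsto_bot)
  set M : ℝ := f z with hMdef
  have hM : ∀ y, f y ≤ M := fun y => hz y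
  set β : ℝ := beta f with hβdef
  have hβpos : 0 < β := lt_of_lt_of_le (hfpos _) (beta_lb hd hfc M hM)
  have hβM : β ≤ M := beta_ub hd hfc M hM
  have hd1 : (1:ℝ) ≤ (d:ℝ) := by exact_mod_cast hd
  have hlogd : 0 ≤ Real.log d := Real.log_nonneg hd1
  -- the sequence of integrals
  have hIlim : Tendsto (fun j => ∫ x, f x ∂(μ (cj j) (sj j))) atTop (𝓝 (∫ x, f x ∂ν)) :=
    hacc f hfc
  -- Step A : every integral is at most β
  have hIle : ∀ j, ∫ x, f x ∂(μ (cj j) (sj j)) ≤ β := by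
    intro j
    set c : ℝ := cj j with hc
    set s : ℝ := sj j with hs
    have hc0 : 0 < c := hcpos j
    have hs0 : 0 < s := (hsrange j).1
    have hs1 : s < 1 := (hsrange j).2
    set P : ℝ := pressure (fun y => c * f y) with hP
    set wt : (n : ℕ) → (Fin (n+1) → Fin d) → ℝ := fun n w =>
      Real.exp (c * s * birkhoff f (n+1) (periodize n w) - ((n:ℝ)+1) * P) with hwt
    set A : ℕ → ℝ := fun n => ∑ w : Fin (n+1) → Fin d, wt n w with hA
    set B : ℕ → ℝ := fun n => ∑ w : Fin (n+1) → Fin d,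
      wt n w * (birkhoff f (n+1) (periodize n w) / ((n:ℝ)+1)) with hB
    have hANonneg : ∀ n, 0 ≤ A n := fun n =>
      Finset.sum_nonneg fun w _ => (Real.exp_pos _).le
    have hAPos : ∀ n, 0 < A n := fun n =>
      Finset.sum_pos (fun w _ => Real.exp_pos _) ⟨fun _ => ⟨0, hd⟩, Finset.mem_univ _⟩
    have hzf : zetaVal f c s f = ∑' n, B n := rfl
    have hz1 : zetaVal f c s (fun _ => 1) = ∑' n, A n := by
      refine tsum_congr fun n => Finset.sum_congr rfl fun w _ => ?_
      rw [birkhoff_const]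
      have hcast : ((n+1 : ℕ) : ℝ) = (n:ℝ)+1 := by push_cast; ring
      rw [hcast]
      rw [mul_one, div_self (by positivity : ((n:ℝ)+1) ≠ 0), mul_one]
    have hone := hdef c s hc0 hs0 hs1 (fun _ => 1) continuous_const
    haveI := hprob c s hc0 hs0 hs1
    rw [integral_const] at hone
    simp only [measure_univ, ENNReal.toReal_one, smul_eq_mul, one_mul] at hone
    have hsumA : Summable A := by
      by_contra hns
      have h0 : zetaVal f c s (fun _ => 1) = 0 := by
        rw [hz1]; exact tsum_eq_zero_of_not_summable hns
      rw [h0] at hone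
      norm_num at hone
    have hZ1pos : 0 < zetaVal f c s (fun _ => 1) := by
      rw [hz1]
      exact Summable.tsum_pos hsumA (fun n => hANonneg n) 0 (hAPos 0)
    have hBle : ∀ n, B n ≤ β * A n := by
      intro n
      rw [hA, hB]
      simp only []
      rw [Finset.mul_sum]
      refine Finset.sum_le_sum fun w _ => ?_
      have h1 := periodic_birkhoff_le hd hθ0 hθ1 hf' hC' hfc M hM n w
      have h2 : birkhoff f (n+1) (periodize n w) / ((n:ℝ)+1) ≤ β := by
        rw [div_le_iff₀ (by positivity : (0:ℝ) < (n:ℝ)+1)]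
        linarith
      have h3 : 0 < wt n w := Real.exp_pos _
      calc wt n w * (birkhoff f (n+1) (periodize n w) / ((n:ℝ)+1)) ≤ wt n w * β := by
            nlinarith
      _ = β * wt n w := by ring
    have hBnn : ∀ n, 0 ≤ B n := by
      intro n
      refine Finset.sum_nonneg fun w _ => ?_
      have := birkhoff_nonneg hfpos (n+1) (periodize n w)
      have h3 : (0:ℝ) < wt n w := Real.exp_pos _
      positivity
    have hsumB : Summable B :=
      Summable.of_nonneg_of_le hBnn hBle (hsumA.mul_left β)
    have hIeq := hdef c s hc0 hs0 hs1 f hfc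
    rw [hIeq, div_le_iff₀ hZ1pos, hzf, hz1]
    calc ∑' n, B n ≤ ∑' n, β * A n := Summable.tsum_le_tsum hBle hsumB (hsumA.mul_left β)
    _ = β * ∑' n, A n := tsum_mul_left
  -- Step B : lower bound, eventually in j
  have hIge : ∀ ε : ℝ, 0 < ε → ∀ᶠ j in atTop,
      β - 11 * ε ≤ ∫ x, f x ∂(μ (cj j) (sj j)) := by
    intro ε hε
    obtain ⟨nh, wh, hdefect⟩ := exists_small_defect hd hθ0 hθ1 hf' hC' hfc M hM ε hε
    set Sh : ℝ := birkhoff f (nh+1) (periodize nh wh) with hSh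
    -- eventual conditions
    set L : ℝ := max (max (((nh:ℝ)+1) * Real.log d) (Real.log (2*d))) (Real.log ((2*β+1)/ε))
      with hL
    have hev1 : ∀ᶠ j in atTop, 1/2 ≤ sj j := by
      have := Metric.tendsto_nhds.mp hsj (1/2) (by norm_num)
      filter_upwards [this] with j hj
      rw [Real.dist_eq, abs_lt] at hj
      linarith [hj.1]
    have hev2 : ∀ᶠ j in atTop, (1 - sj j) * (((nh:ℝ)+1) * β) ≤ ε := by
      have hpos : (0:ℝ) < ε / (((nh:ℝ)+1) * β + 1) := by positivity
      have := Metric.tendsto_nhds.mp hsj _ hpos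
      filter_upwards [this] with j hj
      rw [Real.dist_eq, abs_lt] at hj
      have h1 : 1 - sj j ≤ ε / (((nh:ℝ)+1) * β + 1) := by linarith [hj.1]
      have h2 : (0:ℝ) < ((nh:ℝ)+1) * β + 1 := by positivity
      have h3 : ((nh:ℝ)+1) * β ≤ ((nh:ℝ)+1) * β + 1 := by linarith
      have h4 : 0 ≤ 1 - sj j := by linarith [(hsrange j).2]
      calc (1 - sj j) * (((nh:ℝ)+1) * β) ≤ (ε / (((nh:ℝ)+1) * β + 1)) * (((nh:ℝ)+1) * β + 1) :=
            mul_le_mul h1 h3 (by positivity) (by positivity)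
      _ = ε := div_mul_cancel₀ ε h2.ne'
    have hev3 : ∀ᶠ j in atTop, L + 1 ≤ cj j * ε := by
      have : ∀ᶠ j in atTop, (L+1)/ε ≤ cj j := hcj.eventually_ge_atTop _
      filter_upwards [this] with j hj
      rw [div_le_iff₀ hε] at hj
      linarith
    filter_upwards [hev1, hev2, hev3] with j hsj2 hsjnβ hcL
    -- now the quantitative estimate
    set c : ℝ := cj j with hc
    set s : ℝ := sj j with hs
    have hc0 : 0 < c := hcpos j
    have hs0 : 0 < s := (hsrange j).1
    have hs1 : s < 1 := (hsrange j).2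
    have hcε : 0 < c * ε := by positivity
    have hca : ((nh:ℝ)+1) * Real.log d ≤ c * ε :=
      le_trans (le_trans (le_max_left _ _) (le_max_left _ _)) (by linarith)
    have hcb : Real.log (2*d) ≤ c * ε :=
      le_trans (le_trans (le_max_right _ _) (le_max_left _ _)) (by linarith)
    have hcd : Real.log ((2*β+1)/ε) ≤ c * ε :=
      le_trans (le_max_right _ _) (by linarith)
    set P : ℝ := pressure (fun y => c * f y) with hP
    obtain ⟨hP1, hP2⟩ := pressure_bounds hd hθ0 hθ1 hf' hC' hfc M hM c hc0
    rw [← hβdef] at hP1 hP2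
    set wt : (n : ℕ) → (Fin (n+1) → Fin d) → ℝ := fun n w =>
      Real.exp (c * s * birkhoff f (n+1) (periodize n w) - ((n:ℝ)+1) * P) with hwt
    set A : ℕ → ℝ := fun n => ∑ w : Fin (n+1) → Fin d, wt n w with hA
    set B : ℕ → ℝ := fun n => ∑ w : Fin (n+1) → Fin d,
      wt n w * (birkhoff f (n+1) (periodize n w) / ((n:ℝ)+1)) with hB
    set bad : (n : ℕ) → Finset (Fin (n+1) → Fin d) := fun n =>
      Finset.univ.filter (fun w => birkhoff f (n+1) (periodize n w) ≤ ((n:ℝ)+1) * (β - 10*ε))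
      with hbad
    set Abad : ℕ → ℝ := fun n => ∑ w ∈ bad n, wt n w with hAbad
    have hANonneg : ∀ n, 0 ≤ A n := fun n =>
      Finset.sum_nonneg fun w _ => (Real.exp_pos _).le
    have hAPos : ∀ n, 0 < A n := fun n =>
      Finset.sum_pos (fun w _ => Real.exp_pos _) ⟨fun _ => ⟨0, hd⟩, Finset.mem_univ _⟩
    have hzf : zetaVal f c s f = ∑' n, B n := rfl
    have hz1 : zetaVal f c s (fun _ => 1) = ∑' n, A n := by
      refine tsum_congr fun n => Finset.sum_congr rfl fun w _ => ?_
      rw [birkhoff_const]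
      have hcast : ((n+1 : ℕ) : ℝ) = (n:ℝ)+1 := by push_cast; ring
      rw [hcast]
      rw [mul_one, div_self (by positivity : ((n:ℝ)+1) ≠ 0), mul_one]
    have hone := hdef c s hc0 hs0 hs1 (fun _ => 1) continuous_const
    haveI := hprob c s hc0 hs0 hs1
    rw [integral_const] at hone
    simp only [measure_univ, ENNReal.toReal_one, smul_eq_mul, one_mul] at hone
    have hsumA : Summable A := by
      by_contra hns
      have h0 : zetaVal f c s (fun _ => 1) = 0 := by
        rw [hz1]; exact tsum_eq_zero_of_not_summable hns
      rw [h0] at hone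
      norm_num at hone
    have hZ1pos : 0 < ∑' n, A n := Summable.tsum_pos hsumA (fun n => hANonneg n) 0 (hAPos 0)
    have hBnn : ∀ n, 0 ≤ B n := by
      intro n
      refine Finset.sum_nonneg fun w _ => ?_
      have := birkhoff_nonneg hfpos (n+1) (periodize n w)
      have h3 : (0:ℝ) < wt n w := Real.exp_pos _
      positivity
    have hBle : ∀ n, B n ≤ β * A n := by
      intro n
      rw [hA, hB]
      simp only []
      rw [Finset.mul_sum]
      refine Finset.sum_le_sum fun w _ => ?_
      have h1 := periodic_birkhoff_le hd hθ0 hθ1 hf' hC' hfc M hM n w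
      have h2 : birkhoff f (n+1) (periodize n w) / ((n:ℝ)+1) ≤ β := by
        rw [div_le_iff₀ (by positivity : (0:ℝ) < (n:ℝ)+1)]
        linarith
      have h3 : 0 < wt n w := Real.exp_pos _
      calc wt n w * (birkhoff f (n+1) (periodize n w) / ((n:ℝ)+1)) ≤ wt n w * β := by nlinarith
      _ = β * wt n w := by ring
    have hsumB : Summable B :=
      Summable.of_nonneg_of_le hBnn hBle (hsumA.mul_left β)
    -- the geometric bound on the bad part
    set q : ℝ := (d:ℝ) * Real.exp (c * s * (β - 10*ε) - P) with hq
    have hq0 : 0 ≤ q := by positivity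
    have hy5 : c * s * (β - 10*ε) - P ≤ -(5 * (c * ε)) := by
      have h1 : c * (s * β) ≤ c * β :=
        mul_le_mul_of_nonneg_left
          (by calc s * β ≤ 1 * β := mul_le_mul_of_nonneg_right hs1.le hβpos.le
              _ = β := one_mul β) hc0.le
      have h2 : 5 * (c * ε) ≤ 10 * (c * (s * ε)) := by
        have h2a : (1/2) * ε ≤ s * ε := mul_le_mul_of_nonneg_right hsj2 hε.le
        have h2b : c * ((1/2) * ε) ≤ c * (s * ε) := mul_le_mul_of_nonneg_left h2a hc0.le
        linarith
      linarith [hP1]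
    have hq4 : q ≤ Real.exp (-(4 * (c * ε))) := by
      have hd' : (d:ℝ) = Real.exp (Real.log d) := (Real.exp_log (by positivity)).symm
      calc q ≤ (d:ℝ) * Real.exp (-(5 * (c*ε))) := by
            rw [hq]
            exact mul_le_mul_of_nonneg_left (Real.exp_le_exp.mpr hy5) (by positivity)
      _ = Real.exp (Real.log d - 5 * (c*ε)) := by
            rw [Real.exp_sub, ← hd', Real.exp_neg, div_eq_mul_inv]
      _ ≤ Real.exp (-(4 * (c * ε))) := by
            refine Real.exp_le_exp.mpr ?_
            have : Real.log d ≤ c * ε := by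
              have h2d : Real.log d ≤ Real.log (2*d) := by
                refine Real.log_le_log (by positivity) (by linarith)
              linarith
            linarith
    have hqhalf : q ≤ 1/2 := by
      have h1 : (2:ℝ) * d ≤ Real.exp (5 * (c*ε)) := by
        calc (2:ℝ) * d = Real.exp (Real.log (2*d)) := (Real.exp_log (by positivity)).symm
        _ ≤ Real.exp (5 * (c*ε)) := Real.exp_le_exp.mpr (by linarith)
      have h2 : q ≤ (d:ℝ) * Real.exp (-(5 * (c*ε))) := by
        rw [hq]
        exact mul_le_mul_of_nonneg_left (Real.exp_le_exp.mpr hy5) (by positivity)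
      have h3 : (d:ℝ) * Real.exp (-(5 * (c*ε))) ≤ 1/2 := by
        rw [Real.exp_neg, mul_inv_le_iff₀ (Real.exp_pos _)]
        linarith
      linarith
    have hq1 : q < 1 := lt_of_le_of_lt hqhalf (by norm_num)
    have hAbadle : ∀ n, Abad n ≤ q ^ (n+1) := by
      intro n
      have hcard : ((bad n).card : ℝ) ≤ (d:ℝ) ^ (n+1) := by
        have h1 : (bad n).card ≤ Fintype.card (Fin (n+1) → Fin d) := by
          rw [← Finset.card_univ]
          exact Finset.card_filter_le _ _
        rw [card_words] at h1
        exact_mod_cast h1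
      have hterm : ∀ w ∈ bad n, wt n w ≤ Real.exp (((n:ℝ)+1) * (c * s * (β - 10*ε) - P)) := by
        intro w hw
        rw [hbad, Finset.mem_filter] at hw
        refine Real.exp_le_exp.mpr ?_
        have h2 := hw.2
        have hcs : 0 < c * s := by positivity
        have h3 : c * s * birkhoff f (n+1) (periodize n w)
            ≤ c * s * (((n:ℝ)+1) * (β - 10*ε)) := mul_le_mul_of_nonneg_left h2 hcs.le
        linarith
      calc Abad n ≤ ∑ _w ∈ bad n, Real.exp (((n:ℝ)+1) * (c * s * (β - 10*ε) - P)) :=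
            Finset.sum_le_sum hterm
      _ = ((bad n).card : ℝ) * Real.exp (((n:ℝ)+1) * (c * s * (β - 10*ε) - P)) := by
            rw [Finset.sum_const, nsmul_eq_mul]
      _ ≤ (d:ℝ) ^ (n+1) * Real.exp (((n:ℝ)+1) * (c * s * (β - 10*ε) - P)) :=
            mul_le_mul_of_nonneg_right hcard (Real.exp_pos _).le
      _ = q ^ (n+1) := by
            rw [hq, mul_pow]
            congr 1
            rw [← Real.exp_nat_mul]
            congr 1
            push_cast
            ring
    have hAbadnn : ∀ n, 0 ≤ Abad n := fun n =>
      Finset.sum_nonneg fun w _ => (Real.exp_pos _).le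
    have hsumgeo : Summable (fun n : ℕ => q ^ (n+1)) := by
      have h1 : Summable (fun n : ℕ => q ^ n) := summable_geometric_of_lt_one hq0 hq1
      have h2 := h1.mul_right q
      refine h2.congr fun n => ?_
      rw [← pow_succ]
    have hsumAbad : Summable Abad := Summable.of_nonneg_of_le hAbadnn hAbadle hsumgeo
    have hBadTot : ∑' n, Abad n ≤ 2 * Real.exp (-(4 * (c * ε))) := by
      calc ∑' n, Abad n ≤ ∑' n : ℕ, q ^ (n+1) := Summable.tsum_le_tsum hAbadle hsumAbad hsumgeo
      _ = (∑' n : ℕ, q ^ n) * q := by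
          rw [← tsum_mul_right]
          exact tsum_congr fun n => by rw [← pow_succ]
      _ = (1-q)⁻¹ * q := by rw [tsum_geometric_of_lt_one hq0 hq1]
      _ ≤ 2 * q := by
          have h1 : (1-q)⁻¹ ≤ 2 := by
            rw [inv_le_comm₀ (by linarith) (by norm_num)]
            linarith
          exact mul_le_mul_of_nonneg_right h1 hq0
      _ ≤ 2 * Real.exp (-(4 * (c * ε))) := by linarith [hq4]
    -- lower bound on the partition function
    have hZ1ge : Real.exp (-(3 * (c * ε))) ≤ ∑' n, A n := by
      have hwh : Real.exp (-(3 * (c * ε))) ≤ wt nh wh := by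
        refine Real.exp_le_exp.mpr ?_
        have hcs : 0 < c * s := by positivity
        have h1 : ((nh:ℝ)+1) * β - ε ≤ Sh := by linarith [hdefect]
        have h2 : ((nh:ℝ)+1) * P ≤ ((nh:ℝ)+1) * (c * β + Real.log d) :=
          mul_le_mul_of_nonneg_left hP2 (by positivity)
        have h3 : c * s * (((nh:ℝ)+1) * β - ε) ≤ c * s * Sh :=
          mul_le_mul_of_nonneg_left h1 hcs.le
        have h5 : c * ((1-s) * (((nh:ℝ)+1) * β)) ≤ c * ε :=
          mul_le_mul_of_nonneg_left hsjnβ hc0.le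
        have h7 : c * s * ε ≤ c * ε := by
          have h7a : c * s ≤ c := mul_le_of_le_one_right hc0.le hs1.le
          exact mul_le_mul_of_nonneg_right h7a hε.le
        have h8 : ((nh:ℝ)+1) * Real.log d ≤ c * ε := hca
        linarith
      calc Real.exp (-(3 * (c * ε))) ≤ wt nh wh := hwh
      _ ≤ A nh := Finset.single_le_sum
            (f := fun w : Fin (nh+1) → Fin d => wt nh w)
            (fun w _ => (Real.exp_pos _).le) (Finset.mem_univ wh)
      _ ≤ ∑' n, A n := Summable.le_tsum hsumA nh (fun m _ => hANonneg m)
    -- the main splitting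
    have hsplit : ∀ n, β * A n - B n ≤ 10 * ε * A n + β * Abad n := by
      intro n
      have h1 : β * A n - B n = ∑ w : Fin (n+1) → Fin d,
          wt n w * (β - birkhoff f (n+1) (periodize n w) / ((n:ℝ)+1)) := by
        rw [hA, hB]
        simp only []
        rw [Finset.mul_sum, ← Finset.sum_sub_distrib]
        exact Finset.sum_congr rfl fun w _ => by ring
      rw [h1]
      have h2 : ∀ w : Fin (n+1) → Fin d,
          wt n w * (β - birkhoff f (n+1) (periodize n w) / ((n:ℝ)+1))
            ≤ 10 * ε * wt n w + (if w ∈ bad n then β * wt n w else 0) := by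
        intro w
        have hwpos : 0 < wt n w := Real.exp_pos _
        have hn1 : (0:ℝ) < (n:ℝ)+1 := by positivity
        by_cases hwb : w ∈ bad n
        · rw [if_pos hwb]
          have havg : 0 ≤ birkhoff f (n+1) (periodize n w) / ((n:ℝ)+1) := by
            have := birkhoff_nonneg hfpos (n+1) (periodize n w)
            positivity
          have hle1 : wt n w * (β - birkhoff f (n+1) (periodize n w) / ((n:ℝ)+1))
              ≤ wt n w * β := mul_le_mul_of_nonneg_left (by linarith) hwpos.le
          have hle2 : (0:ℝ) ≤ 10 * ε * wt n w := by positivity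
          linarith
        · rw [if_neg hwb]
          have hgood : ((n:ℝ)+1) * (β - 10*ε) < birkhoff f (n+1) (periodize n w) := by
            rw [hbad, Finset.mem_filter] at hwb
            push_neg at hwb
            exact hwb (Finset.mem_univ w)
          have havg : β - birkhoff f (n+1) (periodize n w) / ((n:ℝ)+1) ≤ 10 * ε := by
            rw [sub_le_iff_le_add, ← sub_le_iff_le_add']
            rw [le_div_iff₀ hn1]
            linarith [hgood]
          have hle1 : wt n w * (β - birkhoff f (n+1) (periodize n w) / ((n:ℝ)+1))
              ≤ wt n w * (10 * ε) := mul_le_mul_of_nonneg_left havg hwpos.le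
          linarith
      calc ∑ w : Fin (n+1) → Fin d,
          wt n w * (β - birkhoff f (n+1) (periodize n w) / ((n:ℝ)+1))
          ≤ ∑ w : Fin (n+1) → Fin d,
            (10 * ε * wt n w + (if w ∈ bad n then β * wt n w else 0)) :=
            Finset.sum_le_sum fun w _ => h2 w
      _ = 10 * ε * A n + β * Abad n := by
          rw [Finset.sum_add_distrib]
          congr 1
          · rw [hA]; simp only []; rw [Finset.mul_sum]
          · rw [Finset.sum_ite_mem, Finset.univ_inter, hAbad]
            simp only []
            rw [Finset.mul_sum]
    -- put everything together
    have hIeq := hdef c s hc0 hs0 hs1 f hfc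
    have hβZ : β * (∑' n, A n) - (∑' n, B n) ≤ 10 * ε * (∑' n, A n) + β * (∑' n, Abad n) := by
      have hs1' : Summable (fun n => β * A n) := hsumA.mul_left β
      have hs2' : Summable (fun n => β * A n - B n) := hs1'.sub hsumB
      have hs3' : Summable (fun n => 10 * ε * A n + β * Abad n) :=
        (hsumA.mul_left (10*ε)).add (hsumAbad.mul_left β)
      calc β * (∑' n, A n) - (∑' n, B n) = ∑' n, (β * A n - B n) := by
            rw [← tsum_mul_left, ← Summable.tsum_sub hs1' hsumB]
      _ ≤ ∑' n, (10 * ε * A n + β * Abad n) := Summable.tsum_le_tsum hsplit hs2' hs3'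
      _ = 10 * ε * (∑' n, A n) + β * (∑' n, Abad n) := by
            rw [Summable.tsum_add (hsumA.mul_left (10*ε)) (hsumAbad.mul_left β),
              tsum_mul_left, tsum_mul_left]
    have hquot : β * (∑' n, Abad n) / (∑' n, A n) ≤ ε := by
      have h1 : β * (∑' n, Abad n) ≤ β * (2 * Real.exp (-(4 * (c * ε)))) :=
        mul_le_mul_of_nonneg_left hBadTot hβpos.le
      have h2 : β * (∑' n, Abad n) / (∑' n, A n)
          ≤ β * (2 * Real.exp (-(4 * (c * ε)))) / Real.exp (-(3 * (c * ε))) :=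
        div_le_div₀ (by positivity) h1 (Real.exp_pos _) hZ1ge
      have halg : Real.exp (-(4*(c*ε))) = Real.exp (-(c*ε)) * Real.exp (-(3*(c*ε))) := by
        rw [← Real.exp_add]
        congr 1
        ring
      have h3 : β * (2 * Real.exp (-(4 * (c * ε)))) / Real.exp (-(3 * (c * ε)))
          = 2 * β * Real.exp (-(c * ε)) := by
        rw [halg]
        field_simp
        try ring
      rw [h3] at h2
      have h4 : 2 * β * Real.exp (-(c * ε)) ≤ ε := by
        have h5 : (2*β+1)/ε ≤ Real.exp (c * ε) := by
          calc (2*β+1)/ε = Real.exp (Real.log ((2*β+1)/ε)) :=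
                (Real.exp_log (by positivity)).symm
          _ ≤ Real.exp (c * ε) := Real.exp_le_exp.mpr hcd
        rw [div_le_iff₀ hε] at h5
        rw [Real.exp_neg, mul_inv_le_iff₀ (Real.exp_pos _)]
        linarith
      linarith
    rw [hIeq, hzf, hz1]
    have h1 : β - (∑' n, B n) / (∑' n, A n)
        = (β * (∑' n, A n) - (∑' n, B n)) / (∑' n, A n) := by
      field_simp
    have h2 : (β * (∑' n, A n) - (∑' n, B n)) / (∑' n, A n)
        ≤ 10 * ε + β * (∑' n, Abad n) / (∑' n, A n) := by
      rw [div_le_iff₀ hZ1pos]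
      have hexp : (10 * ε + β * (∑' n, Abad n) / (∑' n, A n)) * (∑' n, A n)
          = 10 * ε * (∑' n, A n) + β * (∑' n, Abad n) := by
        field_simp
      rw [hexp]
      linarith [hβZ]
    have hfinal : β - (∑' n, B n) / (∑' n, A n) ≤ 11 * ε := by
      rw [h1]
      linarith [h2, hquot]
    linarith [hfinal]
  -- Step C : conclude
  have hub : ∫ x, f x ∂ν ≤ β :=
    le_of_tendsto hIlim (Eventually.of_forall hIle)
  have hlb : ∀ ε : ℝ, 0 < ε → β - 11 * ε ≤ ∫ x, f x ∂ν := by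
    intro ε hε
    exact ge_of_tendsto hIlim (hIge ε hε)
  have hlb' : β ≤ ∫ x, f x ∂ν := by
    by_contra hcon
    push_neg at hcon
    set δ : ℝ := β - ∫ x, f x ∂ν with hδ
    have hδpos : 0 < δ := by linarith
    have := hlb (δ/22) (by linarith)
    linarith
  linarith

theorem stmt5 (d : ℕ) (hd : 0 < d) (θ C : ℝ) (hθ0 : 0 < θ) (hθ1 : θ < 1)
    (f : X d → ℝ) (hf : LipWrt θ C f) (hfpos : ∀ x, 0 < f x)
    (μ : ℝ → ℝ → Measure (X d))
    (hprob : ∀ c s : ℝ, 0 < c → 0 < s → s < 1 → IsProbabilityMeasure (μ c s))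
    (hdef : ∀ c s : ℝ, 0 < c → 0 < s → s < 1 → ∀ k : X d → ℝ, Continuous k →
      ∫ x, k x ∂(μ c s) = zetaVal f c s k / zetaVal f c s (fun _ => 1))
    (ν : Measure (X d)) (hν : IsProbabilityMeasure ν)
    (cj sj : ℕ → ℝ) (hcj : Tendsto cj atTop atTop) (hsj : Tendsto sj atTop (𝓝 1))
    (hcpos : ∀ j, 0 < cj j) (hsrange : ∀ j, 0 < sj j ∧ sj j < 1)
    (hacc : ∀ g : X d → ℝ, Continuous g →
      Tendsto (fun j => ∫ x, g x ∂(μ (cj j) (sj j))) atTop (𝓝 (∫ x, g x ∂ν))) :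
    ∫ x, f x ∂ν = beta f :=
  stmt5' d hd θ C hθ0 hθ1 f hf hfpos μ hprob hdef ν hν cj sj hcj hsj hcpos hsrange hacc
end
end
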